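/- Let f : D → ℂ∪{∞} be meromorphic, γ a simple curve in D ending at e^{iθ}, and c ∈ ℂ∪{∞}. If f is normal along γ (the family {f∘φ_w : w ∈ γ} is normal on D) and f(z) → c as z → e^{iθ} along γ, then f has Δ_γ-boundary value c: C(f, Δ_r γ, e^{iθ}) = {c} for every r ∈ (0,1). -/

import Mathlib

open Complex Set Filter Topology

noncomputable section

def unitDisc : Set ℂ := {z : ℂ | norm z < 1}

def dph (z w : ℂ) : ℝ := norm ((z - w) / (1 - z * (starRingEnd ℂ) w))

def dhyp (z w : ℂ) : ℝ := Real.log ((1 + dph z w) / (1 - dph z w))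

def phiM (w z : ℂ) : ℂ := (z + w) / (1 + z * (starRingEnd ℂ) w)

/-- The spherical (chordal) metric on the Riemann sphere `OnePoint ℂ`. -/
def sphDist : OnePoint ℂ → OnePoint ℂ → ℝ
  | Option.some z, Option.some w =>
      2 * norm (z - w) /
        (Real.sqrt (1 + norm z ^ 2) * Real.sqrt (1 + norm w ^ 2))
  | Option.some z, Option.none => 2 / Real.sqrt (1 + norm z ^ 2)
  | Option.none, Option.some w => 2 / Real.sqrt (1 + norm w ^ 2)
  | Option.none, Option.none => 0

/-- Curvilinear angle along `γ` with pseudo-hyperbolic deflection `r`. -/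
def Delta (r : ℝ) (γ : Set ℂ) : Set ℂ := ⋃ w ∈ γ, {z ∈ unitDisc | dph z w ≤ r}

/-- A simple curve in the unit disc terminating at the boundary point `p`. -/
structure SimpleCurve (p : ℂ) where
  toFun : ℝ → ℂ
  cont : ContinuousOn toFun (Set.Ico 0 1)
  inj : Set.InjOn toFun (Set.Ico 0 1)
  inDisc : ∀ t ∈ Set.Ico (0:ℝ) 1, toFun t ∈ unitDisc
  tends : Filter.Tendsto toFun (nhdsWithin 1 (Set.Ico 0 1)) (nhds p)

def SimpleCurve.carrier {p : ℂ} (γ : SimpleCurve p) : Set ℂ := γ.toFun '' Set.Ico 0 1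

/-- The cluster set of `f` at `p` along the set `A`, w.r.t. the spherical metric. -/
def clusterSet (f : ℂ → OnePoint ℂ) (A : Set ℂ) (p : ℂ) : Set (OnePoint ℂ) :=
  {c | ∃ z : ℕ → ℂ, (∀ n, z n ∈ A) ∧ Filter.Tendsto z Filter.atTop (nhds p) ∧
    Filter.Tendsto (fun n => sphDist (f (z n)) c) Filter.atTop (nhds 0)}

/-- The family `{f ∘ φ_w : w ∈ γ}` is normal on `U`: every sequence admits a subsequence
converging uniformly on compact subsets of `U` in the spherical metric. -/
def NormalAlong (f : ℂ → OnePoint ℂ) (γ : Set ℂ) (U : Set ℂ) : Prop :=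
  ∀ w : ℕ → ℂ, (∀ n, w n ∈ γ) →
    ∃ φ : ℕ → ℕ, StrictMono φ ∧ ∃ h : ℂ → OnePoint ℂ,
      ∀ K : Set ℂ, K ⊆ U → IsCompact K → ∀ ε > 0, ∃ N, ∀ n ≥ N, ∀ z ∈ K,
        sphDist (f (phiM (w (φ n)) z)) (h z) < ε

-- The Riemann-sphere-valued extension of a meromorphic function: at poles the value is ∞.
open scoped Classical in
def toSphere (f : ℂ → ℂ) (z : ℂ) : OnePoint ℂ :=
  if AnalyticAt ℂ f z then (f z : OnePoint ℂ) else (OnePoint.infty : OnePoint ℂ)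

-- The spherical derivative |f'|/(1+|f|²), extended at poles via 1/f.
open scoped Classical in
def sphDeriv (f : ℂ → ℂ) (z : ℂ) : ℝ :=
  if AnalyticAt ℂ f z then norm (deriv f z) / (1 + norm (f z) ^ 2)
  else norm (deriv (fun w => (f w)⁻¹) z) / (1 + norm ((f z)⁻¹) ^ 2)

namespace LV

lemma sphDist_some_some (z w : ℂ) : sphDist (Option.some z) (Option.some w) =
    2 * norm (z - w) /
      (Real.sqrt (1 + norm z ^ 2) * Real.sqrt (1 + norm w ^ 2)) := rfl

lemma sphDist_some_none (z : ℂ) : sphDist (Option.some z) (Option.none) =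
    2 / Real.sqrt (1 + norm z ^ 2) := rfl

lemma sphDist_none_some (w : ℂ) : sphDist (Option.none) (Option.some w) =
    2 / Real.sqrt (1 + norm w ^ 2) := rfl

lemma sphDist_none_none : sphDist (Option.none) (Option.none) = 0 := rfl

lemma coe_eq_some (z : ℂ) : (z : OnePoint ℂ) = Option.some z := rfl

lemma infty_eq_none : (OnePoint.infty : OnePoint ℂ) = Option.none := rfl

lemma sphDist_coe_coe (z w : ℂ) : sphDist (z : OnePoint ℂ) (w : OnePoint ℂ) =
    2 * norm (z - w) /
      (Real.sqrt (1 + norm z ^ 2) * Real.sqrt (1 + norm w ^ 2)) := rfl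

lemma sphDist_coe_infty (z : ℂ) : sphDist (z : OnePoint ℂ) (OnePoint.infty) =
    2 / Real.sqrt (1 + norm z ^ 2) := rfl

lemma sphDist_infty_coe (w : ℂ) : sphDist (OnePoint.infty) (w : OnePoint ℂ) =
    2 / Real.sqrt (1 + norm w ^ 2) := rfl

lemma sphDist_infty_infty : sphDist (OnePoint.infty) (OnePoint.infty) = 0 := rfl

/-- stereographic projection to the sphere, landing in `ℝ³` with the L2 norm -/
def SP : OnePoint ℂ → EuclideanSpace ℝ (Fin 3)
  | Option.some z => WithLp.toLp 2 ![2 * z.re / (1 + Complex.normSq z), 2 * z.im / (1 + Complex.normSq z),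
      (Complex.normSq z - 1) / (1 + Complex.normSq z)]
  | Option.none => WithLp.toLp 2 ![0, 0, 1]

lemma sqrt_one_add_sq_pos (z : ℂ) : 0 < Real.sqrt (1 + norm z ^ 2) := by
  apply Real.sqrt_pos.2; positivity

lemma one_add_normSq_pos (z : ℂ) : 0 < 1 + Complex.normSq z := by
  have := Complex.normSq_nonneg z; linarith

lemma sq_sqrt_one_add (z : ℂ) : Real.sqrt (1 + norm z ^ 2) ^ 2 = 1 + norm z ^ 2 := by
  apply Real.sq_sqrt; positivity

lemma sphDist_eq_dist (x y : OnePoint ℂ) : sphDist x y = dist (SP x) (SP y) := by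
  have dist3 : ∀ a b : EuclideanSpace ℝ (Fin 3), dist a b =
      Real.sqrt ((a 0 - b 0) ^ 2 + ((a 1 - b 1) ^ 2 + ((a 2 - b 2) ^ 2 + 0))) := by
    intro a b
    rw [EuclideanSpace.dist_eq]
    congr 1
    rw [Fin.sum_univ_three]
    simp [Real.dist_eq, sq_abs]
    ring
  match x, y with
  | Option.none, Option.none =>
      rw [sphDist_none_none, dist3]
      norm_num [SP]
  | Option.some z, Option.none =>
      rw [sphDist_some_none, dist3]
      have hz := one_add_normSq_pos z
      have h1 : (SP (Option.some z) 0 - SP Option.none 0) ^ 2 +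
          ((SP (Option.some z) 1 - SP Option.none 1) ^ 2 +
          ((SP (Option.some z) 2 - SP Option.none 2) ^ 2 + 0)) = 4 / (1 + Complex.normSq z) := by
        show (2 * z.re / (1 + Complex.normSq z) - 0) ^ 2 +
          ((2 * z.im / (1 + Complex.normSq z) - 0) ^ 2 +
          (((Complex.normSq z - 1) / (1 + Complex.normSq z) - 1) ^ 2 + 0)) = _
        have hne : (1 + Complex.normSq z) ≠ 0 := ne_of_gt hz
        field_simp
        simp only [Complex.normSq_apply]
        ring
      rw [h1]
      rw [show (4 : ℝ) / (1 + Complex.normSq z) = (2 / Real.sqrt (1 + norm z ^ 2)) ^ 2 by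
        rw [div_pow, sq_sqrt_one_add, Complex.sq_norm]; norm_num]
      rw [Real.sqrt_sq (by positivity)]
  | Option.none, Option.some w =>
      rw [sphDist_none_some, dist3]
      have hw := one_add_normSq_pos w
      have h1 : (SP Option.none 0 - SP (Option.some w) 0) ^ 2 +
          ((SP Option.none 1 - SP (Option.some w) 1) ^ 2 +
          ((SP Option.none 2 - SP (Option.some w) 2) ^ 2 + 0)) = 4 / (1 + Complex.normSq w) := by
        show (0 - 2 * w.re / (1 + Complex.normSq w)) ^ 2 +
          ((0 - 2 * w.im / (1 + Complex.normSq w)) ^ 2 +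
          ((1 - (Complex.normSq w - 1) / (1 + Complex.normSq w)) ^ 2 + 0)) = _
        have hne : (1 + Complex.normSq w) ≠ 0 := ne_of_gt hw
        field_simp
        simp only [Complex.normSq_apply]
        ring
      rw [h1]
      rw [show (4 : ℝ) / (1 + Complex.normSq w) = (2 / Real.sqrt (1 + norm w ^ 2)) ^ 2 by
        rw [div_pow, sq_sqrt_one_add, Complex.sq_norm]; norm_num]
      rw [Real.sqrt_sq (by positivity)]
  | Option.some z, Option.some w =>
      rw [sphDist_some_some, dist3]
      have hz := one_add_normSq_pos z
      have hw := one_add_normSq_pos w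
      have h1 : (SP (Option.some z) 0 - SP (Option.some w) 0) ^ 2 +
          ((SP (Option.some z) 1 - SP (Option.some w) 1) ^ 2 +
          ((SP (Option.some z) 2 - SP (Option.some w) 2) ^ 2 + 0)) =
          4 * Complex.normSq (z - w) / ((1 + Complex.normSq z) * (1 + Complex.normSq w)) := by
        show (2 * z.re / (1 + Complex.normSq z) - 2 * w.re / (1 + Complex.normSq w)) ^ 2 +
          ((2 * z.im / (1 + Complex.normSq z) - 2 * w.im / (1 + Complex.normSq w)) ^ 2 +
          (((Complex.normSq z - 1) / (1 + Complex.normSq z) -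
            (Complex.normSq w - 1) / (1 + Complex.normSq w)) ^ 2 + 0)) = _
        have hne : (1 + Complex.normSq z) ≠ 0 := ne_of_gt hz
        have hne' : (1 + Complex.normSq w) ≠ 0 := ne_of_gt hw
        field_simp
        simp only [Complex.normSq_apply, Complex.sub_re, Complex.sub_im]
        ring
      rw [h1]
      have h2 : (4 : ℝ) * Complex.normSq (z - w) / ((1 + Complex.normSq z) * (1 + Complex.normSq w))
          = (2 * norm (z - w) /
            (Real.sqrt (1 + norm z ^ 2) * Real.sqrt (1 + norm w ^ 2))) ^ 2 := by
        rw [div_pow, mul_pow, mul_pow, sq_sqrt_one_add, sq_sqrt_one_add, Complex.sq_norm,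
          Complex.sq_norm, Complex.sq_norm]
        norm_num
      rw [h2, Real.sqrt_sq (by positivity)]

lemma sphDist_triangle (x y z : OnePoint ℂ) : sphDist x z ≤ sphDist x y + sphDist y z := by
  rw [sphDist_eq_dist, sphDist_eq_dist, sphDist_eq_dist]; exact dist_triangle _ _ _

lemma sphDist_comm (x y : OnePoint ℂ) : sphDist x y = sphDist y x := by
  rw [sphDist_eq_dist, sphDist_eq_dist]; exact dist_comm _ _

lemma sphDist_nonneg (x y : OnePoint ℂ) : 0 ≤ sphDist x y := by
  rw [sphDist_eq_dist]; exact dist_nonneg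

lemma sphDist_self (x : OnePoint ℂ) : sphDist x x = 0 := by
  match x with
  | Option.none => rfl
  | Option.some z => rw [sphDist_some_some]; simp

lemma sphDist_coe_infty_pos (z : ℂ) : 0 < sphDist (z : OnePoint ℂ) OnePoint.infty := by
  rw [sphDist_coe_infty]; positivity

lemma sphDist_eq_zero_iff {x y : OnePoint ℂ} : sphDist x y = 0 ↔ x = y := by
  constructor
  · intro h
    match x, y with
    | Option.none, Option.none => rfl
    | Option.some z, Option.none => exact absurd h (ne_of_gt (sphDist_coe_infty_pos z))
    | Option.none, Option.some w =>
        exact absurd h (ne_of_gt (by show 0 < 2 / Real.sqrt (1 + norm w ^ 2); positivity))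
    | Option.some z, Option.some w =>
        rw [sphDist_some_some] at h
        have h2 : norm (z - w) = 0 := by
          by_contra hc
          have : 0 < 2 * norm (z - w) /
              (Real.sqrt (1 + norm z ^ 2) * Real.sqrt (1 + norm w ^ 2)) := by
            apply div_pos
            · have := norm_nonneg (z - w); positivity
            · exact mul_pos (sqrt_one_add_sq_pos z) (sqrt_one_add_sq_pos w)
          linarith
        have : z - w = 0 := by rwa [norm_eq_zero] at h2
        have : z = w := by linear_combination this
        rw [this]
  · rintro rfl; exact sphDist_self x


lemma sphDist_ne_of_ne {x y : OnePoint ℂ} (h : x ≠ y) : 0 < sphDist x y := by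
  rcases lt_or_eq_of_le (sphDist_nonneg x y) with h1 | h1
  · exact h1
  · exact absurd (sphDist_eq_zero_iff.1 h1.symm) h

/-- the unique-limits lemma -/
lemma eq_of_sphDist_tendsto_zero {a : ℕ → OnePoint ℂ} {c c' : OnePoint ℂ}
    (h1 : Filter.Tendsto (fun n => sphDist (a n) c) Filter.atTop (nhds 0))
    (h2 : Filter.Tendsto (fun n => sphDist (a n) c') Filter.atTop (nhds 0)) : c = c' := by
  by_contra hne
  have hpos := sphDist_ne_of_ne hne
  have h3 : Filter.Tendsto (fun n => sphDist (a n) c + sphDist (a n) c')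
      Filter.atTop (nhds 0) := by simpa using h1.add h2
  have h4 : ∀ᶠ n in Filter.atTop, sphDist (a n) c + sphDist (a n) c' < sphDist c c' :=
    h3.eventually_lt_const hpos
  obtain ⟨n, hn⟩ := h4.exists
  have := sphDist_triangle c (a n) c'
  rw [sphDist_comm c (a n)] at this
  linarith

lemma sphDist_coe_coe_le (x y : ℂ) :
    sphDist (x : OnePoint ℂ) (y : OnePoint ℂ) ≤ 2 * norm (x - y) := by
  rw [sphDist_coe_coe]
  have h1 : (1:ℝ) ≤ Real.sqrt (1 + norm x ^ 2) := by
    nlinarith [sq_sqrt_one_add x, Real.sqrt_nonneg (1 + norm x ^ 2), sq_nonneg (norm x)]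
  have h2 : (1:ℝ) ≤ Real.sqrt (1 + norm y ^ 2) := by
    nlinarith [sq_sqrt_one_add y, Real.sqrt_nonneg (1 + norm y ^ 2), sq_nonneg (norm y)]
  calc 2 * norm (x - y) / (Real.sqrt (1 + norm x ^ 2) * Real.sqrt (1 + norm y ^ 2))
      ≤ 2 * norm (x - y) / 1 := by
        apply div_le_div_of_nonneg_left (by positivity) one_pos
        nlinarith
    _ = 2 * norm (x - y) := by norm_num

lemma abs_le_of_sphDist_infty {x : ℂ} {s : ℝ} (hs : 0 < s)
    (h : s ≤ sphDist (x : OnePoint ℂ) OnePoint.infty) : norm x ≤ 2 / s := by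
  rw [sphDist_coe_infty] at h
  have hq := sqrt_one_add_sq_pos x
  have h2 : Real.sqrt (1 + norm x ^ 2) ≤ 2 / s := by
    rw [le_div_iff₀ hs]
    rw [le_div_iff₀ hq] at h
    linarith [mul_comm s (Real.sqrt (1 + norm x ^ 2))]
  calc norm x = Real.sqrt (norm x ^ 2) := by
        rw [Real.sqrt_sq (norm_nonneg x)]
    _ ≤ Real.sqrt (1 + norm x ^ 2) := by apply Real.sqrt_le_sqrt; linarith
    _ ≤ 2 / s := h2

lemma one_div_le_abs_of_sphDist_infty {x : ℂ} {s : ℝ} (hs : 0 < s) (hs1 : s ≤ 1)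
    (h : sphDist (x : OnePoint ℂ) OnePoint.infty ≤ s) : 1 / s ≤ norm x := by
  rw [sphDist_coe_infty] at h
  have hq := sqrt_one_add_sq_pos x
  have h2 : 2 / s ≤ Real.sqrt (1 + norm x ^ 2) := by
    rw [div_le_iff₀ hq] at h
    rw [div_le_iff₀ hs]
    linarith [mul_comm (Real.sqrt (1 + norm x ^ 2)) s]
  have h3 : (2 / s) ^ 2 ≤ 1 + norm x ^ 2 := by
    have := pow_le_pow_left₀ (by positivity : (0:ℝ) ≤ 2/s) h2 2
    rwa [sq_sqrt_one_add x] at this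
  have h4 : (1 / s) ^ 2 ≤ norm x ^ 2 := by
    have hss : 0 < s ^ 2 := by positivity
    have e1 : (2/s)^2 = 4 / s ^ 2 := by ring
    have e2 : (1/s)^2 = 1 / s ^ 2 := by ring
    rw [e1] at h3; rw [e2]
    have : (1:ℝ) ≤ 3 / s^2 := by
      rw [le_div_iff₀ hss]; nlinarith
    have e3 : (4:ℝ)/s^2 = 3/s^2 + 1/s^2 := by ring
    linarith
  calc 1/s = Real.sqrt ((1/s)^2) := by rw [Real.sqrt_sq (by positivity)]
    _ ≤ Real.sqrt (norm x ^ 2) := Real.sqrt_le_sqrt h4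
    _ = norm x := Real.sqrt_sq (norm_nonneg x)

lemma abs_sub_le_sphDist {x y : ℂ} {M : ℝ} (hx : norm x ≤ M) (hy : norm y ≤ M) :
    norm (x - y) ≤ (1 + M ^ 2) / 2 * sphDist (x : OnePoint ℂ) (y : OnePoint ℂ) := by
  have hM : 0 ≤ M := le_trans (norm_nonneg x) hx
  have hden : 0 < Real.sqrt (1 + norm x ^ 2) * Real.sqrt (1 + norm y ^ 2) :=
    mul_pos (sqrt_one_add_sq_pos x) (sqrt_one_add_sq_pos y)
  have hb : Real.sqrt (1 + norm x ^ 2) * Real.sqrt (1 + norm y ^ 2) ≤ 1 + M^2 := by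
    have b1 : Real.sqrt (1 + norm x ^ 2) ≤ Real.sqrt (1 + M ^ 2) := by
      apply Real.sqrt_le_sqrt; nlinarith [norm_nonneg x]
    have b2 : Real.sqrt (1 + norm y ^ 2) ≤ Real.sqrt (1 + M ^ 2) := by
      apply Real.sqrt_le_sqrt; nlinarith [norm_nonneg y]
    have b3 : Real.sqrt (1 + M ^ 2) * Real.sqrt (1 + M ^ 2) = 1 + M ^ 2 :=
      Real.mul_self_sqrt (by positivity)
    calc Real.sqrt (1 + norm x ^ 2) * Real.sqrt (1 + norm y ^ 2)
        ≤ Real.sqrt (1 + M^2) * Real.sqrt (1 + M^2) :=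
          mul_le_mul b1 b2 (Real.sqrt_nonneg _) (Real.sqrt_nonneg _)
      _ = 1 + M ^ 2 := b3
  have key : sphDist (x : OnePoint ℂ) (y : OnePoint ℂ) *
      (Real.sqrt (1 + norm x ^ 2) * Real.sqrt (1 + norm y ^ 2))
      = 2 * norm (x - y) := by
    rw [sphDist_coe_coe]
    field_simp
  have hsd : 0 ≤ sphDist (x : OnePoint ℂ) (y : OnePoint ℂ) := sphDist_nonneg _ _
  nlinarith [mul_le_mul_of_nonneg_left hb hsd]

/-- value map: `∞ ↦ 0` -/
def val : OnePoint ℂ → ℂ := fun x => x.elim 0 id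

/-- inverted value map: `∞ ↦ 0`, `z ↦ z⁻¹` -/
def ival : OnePoint ℂ → ℂ := fun x => x.elim 0 (·⁻¹)

@[simp] lemma val_coe (z : ℂ) : val (z : OnePoint ℂ) = z := rfl
@[simp] lemma val_infty : val OnePoint.infty = 0 := rfl
@[simp] lemma ival_coe (z : ℂ) : ival (z : OnePoint ℂ) = z⁻¹ := rfl
@[simp] lemma ival_infty : ival OnePoint.infty = 0 := rfl

/-- the "big values" predicate -/
def Big (x : OnePoint ℂ) : Prop := x = OnePoint.infty ∨ (x ≠ OnePoint.infty ∧ 1 ≤ norm (val x))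

lemma ival_lipschitz {x y : OnePoint ℂ} (hx : Big x) (hy : Big y) :
    norm (ival x - ival y) ≤ sphDist x y := by
  have key : ∀ z : ℂ, 1 ≤ norm z →
      norm (z⁻¹) ≤ 2 / Real.sqrt (1 + norm z ^ 2) := by
    intro z hz
    have hz0 : norm z ≠ 0 := by intro h; rw [h] at hz; linarith
    rw [norm_inv, inv_eq_one_div,
      div_le_div_iff₀ (lt_of_lt_of_le one_pos hz) (sqrt_one_add_sq_pos z)]
    have : Real.sqrt (1 + norm z ^ 2) ≤ Real.sqrt ((2 * norm z) ^2) := by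
      apply Real.sqrt_le_sqrt; nlinarith
    rw [Real.sqrt_sq (by positivity)] at this
    linarith
  rcases hx with rfl | ⟨hx1, hx2⟩
  · rcases hy with rfl | ⟨hy1, hy2⟩
    · simp [sphDist_self]
    · obtain ⟨w, rfl⟩ : ∃ w : ℂ, y = (w : OnePoint ℂ) := by
        match y with
        | Option.none => exact absurd rfl hy1
        | Option.some w => exact ⟨w, rfl⟩
      simp only [ival_infty, ival_coe, val_coe] at *
      rw [sphDist_comm, sphDist_coe_infty]
      calc norm (0 - w⁻¹) = norm (w⁻¹) := by rw [zero_sub, norm_neg]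
        _ ≤ 2 / Real.sqrt (1 + norm w ^ 2) := key w hy2
  · obtain ⟨z, rfl⟩ : ∃ z : ℂ, x = (z : OnePoint ℂ) := by
      match x with
      | Option.none => exact absurd rfl hx1
      | Option.some z => exact ⟨z, rfl⟩
    simp only [val_coe] at hx2
    rcases hy with rfl | ⟨hy1, hy2⟩
    · simp only [ival_infty, ival_coe]
      rw [sphDist_coe_infty]
      calc norm (z⁻¹ - 0) = norm (z⁻¹) := by rw [sub_zero]
        _ ≤ 2 / Real.sqrt (1 + norm z ^ 2) := key z hx2
    · obtain ⟨w, rfl⟩ : ∃ w : ℂ, y = (w : OnePoint ℂ) := by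
        match y with
        | Option.none => exact absurd rfl hy1
        | Option.some w => exact ⟨w, rfl⟩
      simp only [val_coe] at hy2
      simp only [ival_coe]
      rw [sphDist_coe_coe]
      have hz0 : z ≠ 0 := by
        intro h; rw [h] at hx2; norm_num at hx2
      have hw0 : w ≠ 0 := by
        intro h; rw [h] at hy2; norm_num at hy2
      have e1 : norm (z⁻¹ - w⁻¹) = norm (z - w) / (norm z * norm w) := by
        rw [show z⁻¹ - w⁻¹ = (w - z) / (z * w) by field_simp]
        rw [norm_div, norm_mul]
        rw [show norm (w - z) = norm (z - w) by rw [← norm_neg]; ring_nf]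
      rw [e1]
      have hzp : 0 < norm z := lt_of_lt_of_le one_pos hx2
      have hwp : 0 < norm w := lt_of_lt_of_le one_pos hy2
      have b1 : Real.sqrt (1 + norm z ^ 2) ≤ Real.sqrt 2 * norm z := by
        rw [show Real.sqrt 2 * norm z = Real.sqrt (2 * norm z ^ 2) by
          rw [Real.sqrt_mul (by norm_num), Real.sqrt_sq (norm_nonneg z)]]
        apply Real.sqrt_le_sqrt; nlinarith
      have b2 : Real.sqrt (1 + norm w ^ 2) ≤ Real.sqrt 2 * norm w := by
        rw [show Real.sqrt 2 * norm w = Real.sqrt (2 * norm w ^ 2) by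
          rw [Real.sqrt_mul (by norm_num), Real.sqrt_sq (norm_nonneg w)]]
        apply Real.sqrt_le_sqrt; nlinarith
      have hprod : Real.sqrt (1 + norm z ^ 2) * Real.sqrt (1 + norm w ^ 2)
          ≤ 2 * (norm z * norm w) := by
        have s2 : Real.sqrt 2 * Real.sqrt 2 = 2 := Real.mul_self_sqrt (by norm_num)
        calc Real.sqrt (1 + norm z ^ 2) * Real.sqrt (1 + norm w ^ 2)
            ≤ (Real.sqrt 2 * norm z) * (Real.sqrt 2 * norm w) :=
              mul_le_mul b1 b2 (Real.sqrt_nonneg _) (by positivity)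
          _ = (Real.sqrt 2 * Real.sqrt 2) * (norm z * norm w) := by ring
          _ = 2 * (norm z * norm w) := by rw [s2]
      rw [div_le_div_iff₀ (by positivity) (by positivity)]
      calc norm (z - w) * (Real.sqrt (1 + norm z ^ 2) * Real.sqrt (1 + norm w ^ 2))
          ≤ norm (z - w) * (2 * (norm z * norm w)) :=
            mul_le_mul_of_nonneg_left hprod (norm_nonneg _)
        _ = 2 * norm (z - w) * (norm z * norm w) := by ring
  
/-! ### Möbius algebra -/

lemma key_add (z w : ℂ) : Complex.normSq (1 + z * (starRingEnd ℂ) w) - Complex.normSq (z + w) =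
    (1 - Complex.normSq z) * (1 - Complex.normSq w) := by
  simp only [Complex.normSq_apply, Complex.add_re, Complex.add_im, Complex.mul_re, Complex.mul_im,
    Complex.one_re, Complex.one_im, Complex.conj_re, Complex.conj_im]
  ring

lemma key_sub (z w : ℂ) : Complex.normSq (1 - z * (starRingEnd ℂ) w) - Complex.normSq (z - w) =
    (1 - Complex.normSq z) * (1 - Complex.normSq w) := by
  simp only [Complex.normSq_apply, Complex.sub_re, Complex.sub_im, Complex.mul_re, Complex.mul_im,
    Complex.one_re, Complex.one_im, Complex.conj_re, Complex.conj_im]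
  ring

lemma one_sub_ne {z w : ℂ} (hz : norm z < 1) (hw : norm w < 1) :
    (1:ℂ) - z * (starRingEnd ℂ) w ≠ 0 := by
  intro h
  have h1 : z * (starRingEnd ℂ) w = 1 := by linear_combination -h
  have h2 : norm (z * (starRingEnd ℂ) w) = 1 := by rw [h1, norm_one]
  rw [norm_mul, Complex.norm_conj] at h2
  nlinarith [norm_nonneg z, norm_nonneg w]

lemma one_add_ne {z w : ℂ} (hz : norm z < 1) (hw : norm w < 1) :
    (1:ℂ) + z * (starRingEnd ℂ) w ≠ 0 := by
  intro h
  have h1 : z * (starRingEnd ℂ) w = -1 := by linear_combination h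
  have h2 : norm (z * (starRingEnd ℂ) w) = 1 := by rw [h1]; simp
  rw [norm_mul, Complex.norm_conj] at h2
  nlinarith [norm_nonneg z, norm_nonneg w]

lemma abs_phiM_lt_one {z w : ℂ} (hz : norm z < 1) (hw : norm w < 1) :
    norm (phiM w z) < 1 := by
  have hne := one_add_ne hz hw
  have hpos : 0 < norm (1 + z * (starRingEnd ℂ) w) := norm_pos_iff.2 hne
  rw [phiM, norm_div, div_lt_one hpos]
  have hk := key_add z w
  have e1 : Complex.normSq (z + w) = norm (z + w) ^ 2 := (Complex.sq_norm _).symm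
  have e2 : Complex.normSq (1 + z * (starRingEnd ℂ) w) =
      norm (1 + z * (starRingEnd ℂ) w) ^ 2 := (Complex.sq_norm _).symm
  have e3 : Complex.normSq z = norm z ^ 2 := (Complex.sq_norm _).symm
  have e4 : Complex.normSq w = norm w ^ 2 := (Complex.sq_norm _).symm
  rw [e1, e2, e3, e4] at hk
  have p1 : 0 < 1 - norm z ^ 2 := by nlinarith [norm_nonneg z]
  have p2 : 0 < 1 - norm w ^ 2 := by nlinarith [norm_nonneg w]
  nlinarith [norm_nonneg (z + w), mul_pos p1 p2]

lemma dph_lt_one {z w : ℂ} (hz : norm z < 1) (hw : norm w < 1) :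
    dph z w < 1 := by
  have hne := one_sub_ne hz hw
  have hpos : 0 < norm (1 - z * (starRingEnd ℂ) w) := norm_pos_iff.2 hne
  rw [dph, norm_div, div_lt_one hpos]
  have hk := key_sub z w
  have e1 : Complex.normSq (z - w) = norm (z - w) ^ 2 := (Complex.sq_norm _).symm
  have e2 : Complex.normSq (1 - z * (starRingEnd ℂ) w) =
      norm (1 - z * (starRingEnd ℂ) w) ^ 2 := (Complex.sq_norm _).symm
  have e3 : Complex.normSq z = norm z ^ 2 := (Complex.sq_norm _).symm
  have e4 : Complex.normSq w = norm w ^ 2 := (Complex.sq_norm _).symm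
  rw [e1, e2, e3, e4] at hk
  have p1 : 0 < 1 - norm z ^ 2 := by nlinarith [norm_nonneg z]
  have p2 : 0 < 1 - norm w ^ 2 := by nlinarith [norm_nonneg w]
  nlinarith [norm_nonneg (z - w), mul_pos p1 p2]

@[simp] lemma dph_self (z : ℂ) : dph z z = 0 := by simp [dph]

lemma dph_nonneg (z w : ℂ) : 0 ≤ dph z w := norm_nonneg _

/-- the inverse Möbius map -/
def psi (w z : ℂ) : ℂ := (z - w) / (1 - z * (starRingEnd ℂ) w)

lemma abs_psi_eq_dph (w z : ℂ) : norm (psi w z) = dph z w := rfl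

lemma phiM_psi {z w : ℂ} (hz : norm z < 1) (hw : norm w < 1) :
    phiM w (psi w z) = z := by
  have hd := one_sub_ne hz hw
  have hw1 := one_sub_ne hw hw
  have e2 : 1 + psi w z * (starRingEnd ℂ) w =
      (1 - w * (starRingEnd ℂ) w) / (1 - z * (starRingEnd ℂ) w) := by
    rw [psi]; field_simp; ring
  have e1 : psi w z + w = z * (1 - w * (starRingEnd ℂ) w) / (1 - z * (starRingEnd ℂ) w) := by
    rw [psi]; field_simp; ring
  rw [phiM, e1, e2]
  rw [div_div_div_eq]
  field_simp

lemma psi_phiM {z w : ℂ} (hz : norm z < 1) (hw : norm w < 1) :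
    psi w (phiM w z) = z := by
  have ha := one_add_ne hz hw
  have hw1 := one_sub_ne hw hw
  have e1 : phiM w z - w = z * (1 - w * (starRingEnd ℂ) w) / (1 + z * (starRingEnd ℂ) w) := by
    rw [phiM]; field_simp; ring
  have e2 : 1 - phiM w z * (starRingEnd ℂ) w =
      (1 - w * (starRingEnd ℂ) w) / (1 + z * (starRingEnd ℂ) w) := by
    rw [phiM]; field_simp; ring
  rw [psi, e1, e2]
  rw [div_div_div_eq]
  field_simp

@[simp] lemma phiM_zero (w : ℂ) : phiM w 0 = w := by simp [phiM]

lemma phiM_w_inj {ζ w₁ w₂ : ℂ} (hζ : norm ζ < 1) (h1 : norm w₁ < 1)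
    (h2 : norm w₂ < 1) (he : phiM w₁ ζ = phiM w₂ ζ) : w₁ = w₂ := by
  have ha : norm (phiM w₁ ζ) < 1 := abs_phiM_lt_one hζ h1
  have e1 : ζ + w₁ = phiM w₁ ζ * (1 + ζ * (starRingEnd ℂ) w₁) := by
    rw [phiM]; field_simp [one_add_ne hζ h1]
  have e2 : ζ + w₂ = phiM w₂ ζ * (1 + ζ * (starRingEnd ℂ) w₂) := by
    rw [phiM]; field_simp [one_add_ne hζ h2]
  rw [← he] at e2
  have e3 : w₁ - w₂ = phiM w₁ ζ * ζ * (starRingEnd ℂ) (w₁ - w₂) := by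
    rw [map_sub]
    linear_combination e1 - e2
  have habs : norm (w₁ - w₂) =
      norm (phiM w₁ ζ) * norm ζ * norm (w₁ - w₂) := by
    conv_lhs => rw [e3]
    rw [norm_mul, norm_mul, Complex.norm_conj]
  have hq : norm (phiM w₁ ζ) * norm ζ < 1 := by
    nlinarith [norm_nonneg ζ, norm_nonneg (phiM w₁ ζ)]
  have hd0 : norm (w₁ - w₂) = 0 := by
    nlinarith [norm_nonneg (w₁ - w₂)]
  have : w₁ - w₂ = 0 := by rwa [norm_eq_zero] at hd0
  linear_combination this

lemma abs_sub_le_of_dph_le {z w : ℂ} {r : ℝ} (hz : norm z < 1) (hw : norm w < 1)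
    (hr0 : 0 ≤ r) (h : dph z w ≤ r) :
    norm (z - w) * (1 - r * norm z) ≤ r * (1 - norm z ^ 2) := by
  have hd := one_sub_ne hz hw
  have hpos : 0 < norm (1 - z * (starRingEnd ℂ) w) := norm_pos_iff.2 hd
  have h1 : norm (z - w) ≤ r * norm (1 - z * (starRingEnd ℂ) w) := by
    rw [dph, norm_div, div_le_iff₀ hpos] at h
    linarith [mul_comm r (norm (1 - z * (starRingEnd ℂ) w))]
  have hsplit : (1:ℂ) - z * (starRingEnd ℂ) w =
      (1 - z * (starRingEnd ℂ) z) + z * ((starRingEnd ℂ) z - (starRingEnd ℂ) w) := by ring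
  have h2 : norm (1 - z * (starRingEnd ℂ) w) ≤
      (1 - norm z ^ 2) + norm z * norm (z - w) := by
    calc norm (1 - z * (starRingEnd ℂ) w)
        ≤ norm (1 - z * (starRingEnd ℂ) z) +
          norm (z * ((starRingEnd ℂ) z - (starRingEnd ℂ) w)) := by
          rw [hsplit]; exact norm_add_le _ _
      _ = (1 - norm z ^ 2) + norm z * norm (z - w) := by
          rw [Complex.mul_conj]
          rw [norm_mul, ← map_sub, Complex.norm_conj]
          congr 1
          rw [show (1:ℂ) - (Complex.normSq z : ℂ) = ((1 - Complex.normSq z : ℝ) : ℂ) by push_cast; ring]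
          rw [Complex.norm_real, Real.norm_eq_abs, _root_.abs_of_nonneg (by nlinarith [Complex.sq_norm z, norm_nonneg z] : (0:ℝ) ≤ 1 - Complex.normSq z)]
          rw [← Complex.sq_norm]
  nlinarith [norm_nonneg (z - w), norm_nonneg z]

lemma dph_gt {z w : ℂ} {s : ℝ} (hz : norm z < 1) (hw : norm w < 1)
    (hs0 : 0 ≤ s) (hs1 : s < 1)
    (hcond : (1 - norm z ^ 2) * (1 - norm w ^ 2) <
      (1 - s ^ 2) * (1 - norm w) ^ 2) : s < dph z w := by
  have hd := one_sub_ne hz hw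
  have hpos : 0 < norm (1 - z * (starRingEnd ℂ) w) := norm_pos_iff.2 hd
  have tri : (1:ℝ) - norm z * norm w ≤
      norm (1 - z * (starRingEnd ℂ) w) := by
    have h := norm_add_le (1 - z * (starRingEnd ℂ) w) (z * (starRingEnd ℂ) w)
    simp only [sub_add_cancel, norm_one] at h
    rw [norm_mul, Complex.norm_conj] at h
    linarith
  have hD : (1:ℝ) - norm w ≤ norm (1 - z * (starRingEnd ℂ) w) := by
    have : norm z * norm w ≤ norm w := by
      nlinarith [norm_nonneg w, norm_nonneg z]
    linarith
  have hk := key_sub z w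
  have e1 : Complex.normSq (z - w) = norm (z - w) ^ 2 := (Complex.sq_norm _).symm
  have e2 : Complex.normSq (1 - z * (starRingEnd ℂ) w) =
      norm (1 - z * (starRingEnd ℂ) w) ^ 2 := (Complex.sq_norm _).symm
  have e3 : Complex.normSq z = norm z ^ 2 := (Complex.sq_norm _).symm
  have e4 : Complex.normSq w = norm w ^ 2 := (Complex.sq_norm _).symm
  rw [e1, e2, e3, e4] at hk
  have hw1 : 0 ≤ 1 - norm w := by linarith
  have hDsq : (1 - norm w) ^ 2 ≤ norm (1 - z * (starRingEnd ℂ) w) ^ 2 := by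
    nlinarith
  have hs2 : 0 < 1 - s ^ 2 := by nlinarith
  have hsq : s ^ 2 * norm (1 - z * (starRingEnd ℂ) w) ^ 2 <
      norm (z - w) ^ 2 := by
    nlinarith [mul_le_mul_of_nonneg_left hDsq (le_of_lt hs2)]
  rw [dph, norm_div]
  rw [lt_div_iff₀ hpos]
  nlinarith [norm_nonneg (z - w), mul_nonneg hs0 hpos.le, hsq]

lemma continuousAt_phiM {w z : ℂ} (hz : norm z < 1) (hw : norm w < 1) :
    ContinuousAt (phiM w) z := by
  apply ContinuousAt.div
  · exact (continuous_id.add continuous_const).continuousAt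
  · exact (continuous_const.add (continuous_id.mul continuous_const)).continuousAt
  · exact one_add_ne hz hw

lemma continuousAt_phiM_w {z w : ℂ} (hz : norm z < 1) (hw : norm w < 1) :
    ContinuousAt (fun u => phiM u z) w := by
  apply ContinuousAt.div
  · exact (continuous_const.add continuous_id).continuousAt
  · exact (continuous_const.add (continuous_const.mul Complex.continuous_conj)).continuousAt
  · exact one_add_ne hz hw

lemma analyticAt_phiM {w z : ℂ} (hz : norm z < 1) (hw : norm w < 1) :
    AnalyticAt ℂ (phiM w) z := by
  apply AnalyticAt.div
  · exact analyticAt_id.add analyticAt_const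
  · exact analyticAt_const.add (analyticAt_id.mul analyticAt_const)
  · exact one_add_ne hz hw



/-! ### Section C : meromorphic dichotomy, no garbage values, continuity of toSphere -/

lemma toSphere_of_analytic {f : ℂ → ℂ} {z : ℂ} (h : AnalyticAt ℂ f z) :
    toSphere f z = (f z : OnePoint ℂ) := by simp [toSphere, h]

lemma toSphere_of_not_analytic {f : ℂ → ℂ} {z : ℂ} (h : ¬ AnalyticAt ℂ f z) :
    toSphere f z = OnePoint.infty := by simp [toSphere, h]

lemma sphDist_coe_infty_le {x : ℂ} (hx : x ≠ 0) :
    sphDist (x : OnePoint ℂ) OnePoint.infty ≤ 2 / norm x := by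
  rw [sphDist_coe_infty]
  apply div_le_div_of_nonneg_left (by norm_num) (norm_pos_iff.2 hx)
  calc norm x = Real.sqrt (norm x ^ 2) := (Real.sqrt_sq (norm_nonneg x)).symm
    _ ≤ Real.sqrt (1 + norm x ^ 2) := Real.sqrt_le_sqrt (by linarith)

lemma mero_cases {f : ℂ → ℂ} {a : ℂ} (hm : MeromorphicAt f a) :
    (∃ G : ℂ → ℂ, AnalyticAt ℂ G a ∧ ∀ᶠ z in 𝓝[≠] a, f z = G z) ∨
    (∃ m : ℕ, ∃ g : ℂ → ℂ, AnalyticAt ℂ g a ∧ g a ≠ 0 ∧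
      ∀ᶠ z in 𝓝[≠] a, f z = (z - a) ^ (-(m + 1 : ℕ) : ℤ) * g z) := by
  rcases eq_or_ne (meromorphicOrderAt f a) ⊤ with h | h
  · left
    exact ⟨0, analyticAt_const, by
      filter_upwards [meromorphicOrderAt_eq_top_iff.1 h] with z hz
      simpa using hz⟩
  · obtain ⟨n, hn⟩ := WithTop.ne_top_iff_exists.1 h
    obtain ⟨g, hg, hgne, hev⟩ := (meromorphicOrderAt_eq_int_iff hm).1 hn.symm
    rcases le_or_gt 0 n with hn0 | hn0
    · left
      obtain ⟨k, rfl⟩ := Int.eq_ofNat_of_zero_le hn0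
      refine ⟨fun z => (z - a) ^ k * g z, ((analyticAt_id.sub analyticAt_const).pow k).mul hg, ?_⟩
      filter_upwards [hev] with z hz
      rw [hz]
      simp [zpow_natCast, smul_eq_mul]
    · right
      obtain ⟨m, hmn⟩ : ∃ m : ℕ, n = -(m + 1 : ℕ) := by
        refine ⟨(-(n+1)).toNat, ?_⟩
        omega
      refine ⟨m, g, hg, hgne, ?_⟩
      filter_upwards [hev] with z hz
      rw [hz, hmn]
      simp [smul_eq_mul]

/-- points where the meromorphic `f` fails to be analytic but is not an honest pole
(`garbage points`) are incompatible with normality along a curve. -/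
lemma no_garbage {p : ℂ} (γ : SimpleCurve p) (f : ℂ → ℂ)
    (hnorm : NormalAlong (toSphere f) γ.carrier unitDisc)
    {a : ℂ} (ha : norm a < 1) (hma : MeromorphicAt f a) (hna : ¬ AnalyticAt ℂ f a) :
    ∃ m : ℕ, ∃ g : ℂ → ℂ, AnalyticAt ℂ g a ∧ g a ≠ 0 ∧
      ∀ᶠ z in 𝓝[≠] a, f z = (z - a) ^ (-(m + 1 : ℕ) : ℤ) * g z := by
  rcases mero_cases hma with ⟨G, hG, hev⟩ | hp
  swap
  · exact hp
  exfalso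
  set L := G a with hL
  set η := sphDist (L : OnePoint ℂ) OnePoint.infty with hη_def
  have hη : 0 < η := sphDist_coe_infty_pos L
  -- find a punctured ball on which f is analytic, equal to G, and close to L
  obtain ⟨ρ₁, hρ₁pos, hρ₁⟩ : ∃ ρ > 0, ∀ u, dist u a < ρ → u ≠ a → f u = G u := by
    have h1 : ∀ᶠ u in 𝓝 a, u ≠ a → f u = G u := eventually_nhdsWithin_iff.1 hev
    obtain ⟨ρ, hρpos, hρ⟩ := Metric.eventually_nhds_iff.1 h1
    exact ⟨ρ, hρpos, fun u hu hne => hρ hu hne⟩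
  obtain ⟨ρ₂, hρ₂pos, hρ₂⟩ : ∃ ρ > 0, ∀ u, dist u a < ρ → norm (G u - L) < η / 16 := by
    have h1 := hG.continuousAt
    rw [Metric.continuousAt_iff] at h1
    obtain ⟨δ, hδpos, hδ⟩ := h1 (η / 16) (by positivity)
    exact ⟨δ, hδpos, fun u hu => by
      have := hδ hu
      rwa [Complex.dist_eq] at this⟩
  obtain ⟨ρ₃, hρ₃pos, hρ₃⟩ : ∃ ρ > 0, ∀ u, dist u a < ρ → AnalyticAt ℂ G u := by
    obtain ⟨ρ, hρpos, hρ⟩ := Metric.eventually_nhds_iff.1 hG.eventually_analyticAt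
    exact ⟨ρ, hρpos, hρ⟩
  set ρ := min ρ₁ (min ρ₂ ρ₃) with hρ_def
  have hρpos : 0 < ρ := lt_min hρ₁pos (lt_min hρ₂pos hρ₃pos)
  have hS : ∀ u, dist u a < ρ → u ≠ a →
      AnalyticAt ℂ f u ∧ norm (f u - L) < η / 16 := by
    intro u hu hne
    have hu1 : dist u a < ρ₁ := lt_of_lt_of_le hu (min_le_left _ _)
    have hu2 : dist u a < ρ₂ := lt_of_lt_of_le hu (le_trans (min_le_right _ _) (min_le_left _ _))
    have hu3 : dist u a < ρ₃ := lt_of_lt_of_le hu (le_trans (min_le_right _ _) (min_le_right _ _))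
    constructor
    · apply (hρ₃ u hu3).congr
      have hV : IsOpen (Metric.ball a ρ₁ \ {a}) := Metric.isOpen_ball.sdiff isClosed_singleton
      have huV : u ∈ Metric.ball a ρ₁ \ {a} := ⟨Metric.mem_ball.2 hu1, hne⟩
      filter_upwards [hV.mem_nhds huV] with x ⟨hx1, hx2⟩
      exact (hρ₁ x (Metric.mem_ball.1 hx1) hx2).symm
    · rw [hρ₁ u hu1 hne]
      exact hρ₂ u hu2
  -- the curve sequence converging to an interior point
  set t : ℕ → ℝ := fun n => 1/2 - 1/(n+3) with ht_def
  have ht_mem : ∀ n : ℕ, t n ∈ Set.Ico (0:ℝ) 1 := by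
    intro n
    constructor
    · have h1 : (1:ℝ)/(n+3) ≤ 1/3 := by
        apply div_le_div_of_nonneg_left (by norm_num) (by norm_num)
        push_cast; linarith [Nat.cast_nonneg (α := ℝ) n]
      simp only [ht_def]; linarith
    · have h1 : (0:ℝ) < 1/(n+3) := by positivity
      simp only [ht_def]; linarith
  have hhalf : (1/2 : ℝ) ∈ Set.Ico (0:ℝ) 1 := by norm_num
  set v : ℕ → ℂ := fun n => γ.toFun (t n) with hv_def
  set vstar : ℂ := γ.toFun (1/2) with hvstar_def
  have hv_mem : ∀ n, v n ∈ γ.carrier := fun n => ⟨t n, ht_mem n, rfl⟩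
  have hv_disc : ∀ n, norm (v n) < 1 := fun n => γ.inDisc (t n) (ht_mem n)
  have hvstar_disc : norm vstar < 1 := γ.inDisc _ hhalf
  have ht_tendsto : Filter.Tendsto t Filter.atTop (nhds (1/2 : ℝ)) := by
    have h1 : Filter.Tendsto (fun n : ℕ => ((n:ℝ)+3)) Filter.atTop Filter.atTop :=
      tendsto_atTop_add_const_right _ 3 tendsto_natCast_atTop_atTop
    have h0 := h1.inv_tendsto_atTop
    have h0' : Filter.Tendsto (fun n : ℕ => (1:ℝ)/((n:ℝ)+3)) Filter.atTop (nhds 0) := by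
      simpa [one_div, Pi.inv_def] using h0
    have h2 := h0'.const_sub (1/2 : ℝ)
    rw [sub_zero] at h2
    exact h2
  have hv_tendsto : Filter.Tendsto v Filter.atTop (nhds vstar) := by
    apply (γ.cont.continuousWithinAt hhalf).tendsto.comp
    apply tendsto_nhdsWithin_of_tendsto_nhds_of_eventually_within _ ht_tendsto
    exact Filter.Eventually.of_forall ht_mem
  have hv_ne : ∀ n, v n ≠ vstar := by
    intro n h
    have := γ.inj (ht_mem n) hhalf h
    have h2 : (1:ℝ)/(n+3) > 0 := by positivity
    simp only [ht_def] at this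
    linarith
  -- normality
  obtain ⟨φ, hφ, h, H⟩ := hnorm v hv_mem
  set R := (dph a vstar + 1)/2 with hR_def
  have hdphstar : dph a vstar < 1 := dph_lt_one ha hvstar_disc
  have hR1 : R < 1 := by simp only [hR_def]; linarith
  have hRlt : dph a vstar < R := by
    simp only [hR_def]; linarith
  have hK_sub : Metric.closedBall (0:ℂ) R ⊆ unitDisc := by
    intro x hx
    simp only [Metric.mem_closedBall, Complex.dist_eq, sub_zero] at hx
    exact lt_of_le_of_lt hx hR1
  obtain ⟨N, hN⟩ := H (Metric.closedBall 0 R) hK_sub (isCompact_closedBall 0 R) (η/8) (by positivity)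
  set V : ℕ → ℂ := fun n => v (φ n) with hV_def
  set Z : ℕ → ℂ := fun n => psi (V n) a with hZ_def
  have hV_tendsto : Filter.Tendsto V Filter.atTop (nhds vstar) :=
    hv_tendsto.comp hφ.tendsto_atTop
  have hV_disc : ∀ n, norm (V n) < 1 := fun n => hv_disc (φ n)
  have hV_ne : ∀ n, V n ≠ vstar := fun n => hv_ne (φ n)
  set zstar : ℂ := psi vstar a with hzstar_def
  have hZ_tendsto : Filter.Tendsto Z Filter.atTop (nhds zstar) := by
    have hcont : ContinuousAt (fun w => psi w a) vstar := by
      apply ContinuousAt.div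
      · exact (continuous_const.sub continuous_id).continuousAt
      · exact (continuous_const.sub (continuous_const.mul Complex.continuous_conj)).continuousAt
      · exact one_sub_ne ha hvstar_disc
    exact hcont.tendsto.comp hV_tendsto
  have hZ_disc : ∀ n, norm (Z n) < 1 := by
    intro n
    rw [hZ_def, abs_psi_eq_dph]
    exact dph_lt_one ha (hV_disc n)
  have hphiZ : ∀ n, phiM (V n) (Z n) = a := fun n => phiM_psi ha (hV_disc n)
  have habs_zstar : norm zstar = dph a vstar := abs_psi_eq_dph vstar a
  -- choose m
  have hev1 : ∀ᶠ m in Filter.atTop, N ≤ m := Filter.eventually_ge_atTop N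
  have hev2 : ∀ᶠ m in Filter.atTop, norm (Z m) ≤ R := by
    have : Filter.Tendsto (fun m => norm (Z m)) Filter.atTop (nhds (dph a vstar)) := by
      rw [← habs_zstar]
      exact (continuous_norm.tendsto zstar).comp hZ_tendsto
    exact this.eventually_le_const hRlt
  have hb_tendsto : Filter.Tendsto (fun m => phiM vstar (Z m)) Filter.atTop (nhds a) := by
    have hc : ContinuousAt (phiM vstar) zstar := by
      apply continuousAt_phiM _ hvstar_disc
      rw [habs_zstar]; exact hdphstar
    have := hc.tendsto.comp hZ_tendsto
    rwa [phiM_psi ha hvstar_disc] at this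
  have hev3 : ∀ᶠ m in Filter.atTop, dist (phiM vstar (Z m)) a < ρ/4 := by
    have := Metric.tendsto_nhds.1 hb_tendsto (ρ/4) (by positivity)
    exact this
  obtain ⟨m, hm1, hm23⟩ := (hev1.and (hev2.and hev3)).exists
  obtain ⟨hm2, hm3⟩ := hm23
  set b : ℂ := phiM vstar (Z m) with hb_def
  have hb_ne : b ≠ a := by
    intro hba
    have : vstar = V m := by
      apply phiM_w_inj (hZ_disc m) hvstar_disc (hV_disc m)
      rw [← hb_def] at *
      rw [hba, hphiZ m]
    exact hV_ne m this.symm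
  have hZmK : Z m ∈ Metric.closedBall (0:ℂ) R := by
    simp only [Metric.mem_closedBall, Complex.dist_eq, sub_zero]
    exact hm2
  -- fact 1
  have fact1 : sphDist OnePoint.infty (h (Z m)) < η/8 := by
    have := hN m hm1 (Z m) hZmK
    rwa [hphiZ m, toSphere_of_not_analytic hna] at this
  -- choose n with x n close to b
  have hx_tendsto : Filter.Tendsto (fun n => phiM (V n) (Z m)) Filter.atTop (nhds b) := by
    have hc : ContinuousAt (fun w => phiM w (Z m)) vstar := continuousAt_phiM_w (hZ_disc m) hvstar_disc
    exact hc.tendsto.comp hV_tendsto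
  have hdba : 0 < dist b a := by
    rw [dist_pos]; exact hb_ne
  have hev4 : ∀ᶠ n in Filter.atTop, dist (phiM (V n) (Z m)) b < min (ρ/4) (dist b a) := by
    exact Metric.tendsto_nhds.1 hx_tendsto _ (lt_min (by positivity) hdba)
  obtain ⟨n, hn1, hn2⟩ := ((Filter.eventually_ge_atTop N).and hev4).exists
  set x : ℂ := phiM (V n) (Z m) with hx_def
  have hxa : dist x a < ρ := by
    calc dist x a ≤ dist x b + dist b a := dist_triangle _ _ _
      _ < ρ/4 + ρ/4 := by
          have h1 := lt_of_lt_of_le hn2 (min_le_left _ _)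
          linarith [hm3]
      _ ≤ ρ := by linarith
  have hx_ne : x ≠ a := by
    intro hxa'
    have h1 := lt_of_lt_of_le hn2 (min_le_right _ _)
    rw [hxa'] at h1
    rw [dist_comm] at h1
    exact absurd h1 (lt_irrefl _)
  obtain ⟨hx_an, hx_close⟩ := hS x hxa hx_ne
  have fact2 : sphDist (toSphere f x) (h (Z m)) < η/8 := hN n hn1 (Z m) hZmK
  rw [toSphere_of_analytic hx_an] at fact2
  have fact3 : sphDist (L : OnePoint ℂ) ((f x : ℂ) : OnePoint ℂ) < η/8 := by
    calc sphDist (L : OnePoint ℂ) ((f x : ℂ) : OnePoint ℂ) ≤ 2 * norm (L - f x) :=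
          sphDist_coe_coe_le _ _
      _ = 2 * norm (f x - L) := by rw [← norm_neg]; ring_nf
      _ < 2 * (η/16) := by linarith
      _ = η/8 := by ring
  have tri1 : η ≤ sphDist (L : OnePoint ℂ) ((f x : ℂ) : OnePoint ℂ) +
      sphDist ((f x : ℂ) : OnePoint ℂ) (h (Z m)) + sphDist (h (Z m)) OnePoint.infty := by
    calc η = sphDist (L : OnePoint ℂ) OnePoint.infty := hη_def
      _ ≤ sphDist (L : OnePoint ℂ) (h (Z m)) + sphDist (h (Z m)) OnePoint.infty :=
          sphDist_triangle _ _ _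
      _ ≤ (sphDist (L : OnePoint ℂ) ((f x : ℂ) : OnePoint ℂ) +
          sphDist ((f x : ℂ) : OnePoint ℂ) (h (Z m))) + sphDist (h (Z m)) OnePoint.infty := by
          have := sphDist_triangle (L : OnePoint ℂ) ((f x : ℂ) : OnePoint ℂ) (h (Z m))
          linarith
  rw [sphDist_comm (h (Z m)) OnePoint.infty] at tri1
  linarith

/-- spherical-metric continuity -/
def SphContAt (F : ℂ → OnePoint ℂ) (z : ℂ) : Prop :=
  ∀ ε > 0, ∃ δ > 0, ∀ w, dist w z < δ → sphDist (F w) (F z) < ε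

lemma toSphere_contAt {p : ℂ} (γ : SimpleCurve p) (f : ℂ → ℂ)
    (hf : MeromorphicOn f unitDisc)
    (hnorm : NormalAlong (toSphere f) γ.carrier unitDisc)
    {a : ℂ} (ha : norm a < 1) : SphContAt (toSphere f) a := by
  by_cases han : AnalyticAt ℂ f a
  · intro ε hε
    obtain ⟨δ₁, hδ₁pos, hδ₁⟩ := Metric.eventually_nhds_iff.1 han.eventually_analyticAt
    obtain ⟨δ₂, hδ₂pos, hδ₂⟩ := Metric.continuousAt_iff.1 han.continuousAt (ε/4) (by positivity)
    refine ⟨min δ₁ δ₂, lt_min hδ₁pos hδ₂pos, fun w hw => ?_⟩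
    have hw1 : dist w a < δ₁ := lt_of_lt_of_le hw (min_le_left _ _)
    have hw2 : dist w a < δ₂ := lt_of_lt_of_le hw (min_le_right _ _)
    rw [toSphere_of_analytic (hδ₁ hw1), toSphere_of_analytic han]
    calc sphDist ((f w : ℂ) : OnePoint ℂ) ((f a : ℂ) : OnePoint ℂ)
        ≤ 2 * norm (f w - f a) := sphDist_coe_coe_le _ _
      _ < 2 * (ε/4) := by
          have := hδ₂ hw2
          rw [Complex.dist_eq] at this
          linarith
      _ < ε := by linarith
  · obtain ⟨m, g, hg, hgne, hev⟩ := no_garbage γ f hnorm ha (hf a ha) han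
    intro ε hε
    obtain ⟨ρ₁, hρ₁pos, hρ₁⟩ : ∃ ρ > 0, ∀ u, dist u a < ρ → u ≠ a →
        f u = (u - a) ^ (-(m + 1 : ℕ) : ℤ) * g u := by
      have h1 := eventually_nhdsWithin_iff.1 hev
      obtain ⟨ρ, hρpos, hρ⟩ := Metric.eventually_nhds_iff.1 h1
      exact ⟨ρ, hρpos, fun u hu hne => hρ hu hne⟩
    obtain ⟨ρ₂, hρ₂pos, hρ₂⟩ : ∃ ρ > 0, ∀ u, dist u a < ρ →
        norm (g a) / 2 ≤ norm (g u) := by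
      obtain ⟨δ, hδpos, hδ⟩ := Metric.continuousAt_iff.1 hg.continuousAt
        (norm (g a) / 2) (half_pos (norm_pos_iff.2 hgne))
      refine ⟨δ, hδpos, fun u hu => ?_⟩
      have h1 := hδ hu
      rw [Complex.dist_eq] at h1
      have h2 : norm (g a) ≤ norm (g a - g u) + norm (g u) := by
        have h3 := norm_add_le (g a - g u) (g u)
        simpa using h3
      have h3 : norm (g a - g u) = norm (g u - g a) := by
        rw [← norm_neg]; ring_nf
      linarith
    obtain ⟨ρ₃, hρ₃pos, hρ₃⟩ : ∃ ρ > 0, ∀ u, dist u a < ρ → AnalyticAt ℂ g u := by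
      obtain ⟨ρ', hρ'pos, hρ'⟩ := Metric.eventually_nhds_iff.1 hg.eventually_analyticAt
      exact ⟨ρ', hρ'pos, hρ'⟩
    set c0 := norm (g a) with hc0_def
    have hc0pos : 0 < c0 := norm_pos_iff.2 hgne
    set δ := min (min ρ₁ ρ₂) (min ρ₃ (min 1 (ε * c0 / 8))) with hδ_def
    have hδpos : 0 < δ :=
      lt_min (lt_min hρ₁pos hρ₂pos) (lt_min hρ₃pos (lt_min one_pos (by positivity)))
    refine ⟨δ, hδpos, fun w hw => ?_⟩
    rw [toSphere_of_not_analytic han]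
    by_cases hwa : w = a
    · rw [hwa, toSphere_of_not_analytic han, sphDist_infty_infty]
      exact hε
    · have hw1 : dist w a < ρ₁ := lt_of_lt_of_le hw (le_trans (min_le_left _ _) (min_le_left _ _))
      have hw2 : dist w a < ρ₂ := lt_of_lt_of_le hw (le_trans (min_le_left _ _) (min_le_right _ _))
      have hw3 : dist w a < ρ₃ :=
        lt_of_lt_of_le hw (le_trans (min_le_right _ _) (min_le_left _ _))
      have hw4 : dist w a < 1 := lt_of_lt_of_le hw
        (le_trans (min_le_right _ _) (le_trans (min_le_right _ _) (min_le_left _ _)))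
      have hw5 : dist w a < ε * c0 / 8 := lt_of_lt_of_le hw
        (le_trans (min_le_right _ _) (le_trans (min_le_right _ _) (min_le_right _ _)))
      have hwa0 : w - a ≠ 0 := sub_ne_zero.2 hwa
      have hrepeq : ∀ u : ℂ, (u - a) ^ (-(m + 1 : ℕ) : ℤ) = ((u - a) ^ (m + 1 : ℕ))⁻¹ := by
        intro u; rw [zpow_neg, zpow_natCast]
      have hfw : f w = (w - a) ^ (-(m + 1 : ℕ) : ℤ) * g w := hρ₁ w hw1 hwa
      have h_an : AnalyticAt ℂ f w := by
        have h1 : AnalyticAt ℂ (fun u => ((u - a) ^ (m + 1 : ℕ))⁻¹ * g u) w :=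
          (((analyticAt_id.sub analyticAt_const).pow (m+1)).inv
            (pow_ne_zero _ hwa0)).mul (hρ₃ w hw3)
        apply h1.congr
        have hV : IsOpen (Metric.ball a ρ₁ \ {a}) := Metric.isOpen_ball.sdiff isClosed_singleton
        have hwV : w ∈ Metric.ball a ρ₁ \ {a} := ⟨Metric.mem_ball.2 hw1, hwa⟩
        filter_upwards [hV.mem_nhds hwV] with x ⟨hx1, hx2⟩
        rw [hρ₁ x (Metric.mem_ball.1 hx1) hx2, hrepeq]
      rw [toSphere_of_analytic h_an]
      have habsw : norm (w - a) = dist w a := by rw [Complex.dist_eq]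
      have hdpos : 0 < dist w a := dist_pos.2 hwa
      have habsf : norm (f w) = norm (g w) / norm (w - a) ^ (m + 1 : ℕ) := by
        rw [hfw, hrepeq, norm_mul, norm_inv, norm_pow]
        rw [inv_mul_eq_div]
      have hpowle : norm (w - a) ^ (m + 1 : ℕ) ≤ norm (w - a) := by
        have h0 : norm (w - a) ≤ 1 := by rw [habsw]; exact hw4.le
        calc norm (w - a) ^ (m + 1 : ℕ) ≤ norm (w - a) ^ 1 :=
              pow_le_pow_of_le_one (norm_nonneg _) h0 (by omega)
          _ = norm (w - a) := pow_one _
      have hgw : c0 / 2 ≤ norm (g w) := hρ₂ w hw2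
      have hpowpos : 0 < norm (w - a) ^ (m + 1 : ℕ) := by
        apply pow_pos; rw [habsw]; exact hdpos
      have hflow : c0 / 2 / dist w a ≤ norm (f w) := by
        rw [habsf]
        apply div_le_div₀ (norm_nonneg _) hgw hpowpos
        rw [← habsw]; exact hpowle
      have hfpos : 0 < norm (f w) := lt_of_lt_of_le (by positivity) hflow
      have hfne : f w ≠ 0 := by
        intro h0; rw [h0] at hfpos; simp at hfpos
      calc sphDist ((f w : ℂ) : OnePoint ℂ) OnePoint.infty ≤ 2 / norm (f w) :=
            sphDist_coe_infty_le hfne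
        _ ≤ 2 / (c0 / 2 / dist w a) := by
            apply div_le_div_of_nonneg_left (by norm_num) (by positivity) hflow
        _ = 4 * dist w a / c0 := by field_simp; ring
        _ < 4 * (ε * c0 / 8) / c0 := by
            apply (div_lt_div_iff_of_pos_right hc0pos).2
            linarith
        _ = ε / 2 := by field_simp; ring
        _ < ε := by linarith

/-! ### Section D : spherical continuation lemma -/

lemma ne_infty_eq_coe {x : OnePoint ℂ} (h : x ≠ OnePoint.infty) :
    x = ((val x : ℂ) : OnePoint ℂ) := by
  match x with
  | Option.none => exact absurd rfl h
  | Option.some z => rfl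

lemma sphDist_zero_infty : sphDist ((0:ℂ) : OnePoint ℂ) OnePoint.infty = 2 := by
  rw [sphDist_coe_infty]; norm_num

lemma main_continuation {r'' : ℝ} (hr : 0 < r'') {h : ℂ → OnePoint ℂ} {c : OnePoint ℂ}
    (hcont : ∀ z ∈ Metric.ball (0:ℂ) r'', SphContAt h z)
    (hfin : ∀ z ∈ Metric.ball (0:ℂ) r'', h z ≠ OnePoint.infty →
      AnalyticAt ℂ (fun w => val (h w)) z)
    (hinf : ∀ z ∈ Metric.ball (0:ℂ) r'', h z = OnePoint.infty →
      AnalyticAt ℂ (fun w => ival (h w)) z)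
    (hfreq : ∃ᶠ w in 𝓝[≠] (0:ℂ), h w = c) :
    ∀ z ∈ Metric.ball (0:ℂ) r'', h z = c := by
  set B := Metric.ball (0:ℂ) r'' with hB_def
  set T := {z : ℂ | z ∈ B ∧ ∃ᶠ w in 𝓝[≠] z, h w = c} with hT_def
  -- at any point of T, the value is c
  have key : ∀ z ∈ T, h z = c := by
    rintro z ⟨hzB, hzf⟩
    by_contra hne
    have hd : 0 < sphDist (h z) c := sphDist_ne_of_ne hne
    obtain ⟨δ, hδpos, hδ⟩ := hcont z hzB (sphDist (h z) c) hd
    have hball : ∀ᶠ w in 𝓝[≠] z, dist w z < δ :=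
      (Metric.eventually_nhds_iff.2 ⟨δ, hδpos, fun x hx => hx⟩).filter_mono nhdsWithin_le_nhds
    obtain ⟨w, hw1, hw2⟩ := (hzf.and_eventually hball).exists
    have := hδ w hw2
    rw [hw1, sphDist_comm] at this
    exact absurd this (lt_irrefl _)
  -- at any point of T, h = c in a neighbourhood
  have keyev : ∀ z ∈ T, ∀ᶠ w in 𝓝 z, h w = c := by
    rintro z hzT
    obtain ⟨hzB, hzf⟩ := hzT
    have hzc : h z = c := key z ⟨hzB, hzf⟩
    by_cases hcinf : c = OnePoint.infty
    · subst hcinf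
      have han := hinf z hzB hzc
      obtain ⟨δ₁, hδ₁pos, hδ₁⟩ := hcont z hzB 1 one_pos
      have hfz : ∃ᶠ w in 𝓝[≠] z, (fun w => ival (h w)) w = 0 := by
        apply hzf.mono
        intro w hw
        simp only [hw, ival_infty]
      have hev0 : ∀ᶠ w in 𝓝 z, ival (h w) = 0 :=
        han.frequently_zero_iff_eventually_zero.1 hfz
      have hball : ∀ᶠ w in 𝓝 z, dist w z < δ₁ :=
        Metric.eventually_nhds_iff.2 ⟨δ₁, hδ₁pos, fun x hx => hx⟩
      filter_upwards [hev0, hball] with w h1 h2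
      by_contra hwinf
      have hwc : h w = ((val (h w) : ℂ) : OnePoint ℂ) := ne_infty_eq_coe hwinf
      have h3 : val (h w) = 0 := by
        rw [hwc] at h1
        simp only [ival_coe] at h1
        exact inv_eq_zero.1 h1
      have h4 := hδ₁ w h2
      rw [hwc, h3, hzc, sphDist_zero_infty] at h4
      linarith
    · obtain ⟨L, rfl⟩ : ∃ L : ℂ, c = (L : OnePoint ℂ) := by
        match c with
        | Option.none => exact absurd rfl hcinf
        | Option.some L => exact ⟨L, rfl⟩
      have hzninf : h z ≠ OnePoint.infty := by
        rw [hzc]; exact OnePoint.coe_ne_infty L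
      have han := hfin z hzB hzninf
      set η := sphDist ((L:ℂ) : OnePoint ℂ) OnePoint.infty with hη_def
      have hηpos : 0 < η := sphDist_coe_infty_pos L
      obtain ⟨δ₁, hδ₁pos, hδ₁⟩ := hcont z hzB (η/2) (by positivity)
      have hfz : ∃ᶠ w in 𝓝[≠] z, (fun w => val (h w) - L) w = 0 := by
        apply hzf.mono
        intro w hw
        simp only [hw, val_coe, sub_self]
      have hev0 : ∀ᶠ w in 𝓝 z, val (h w) - L = 0 :=
        (han.sub analyticAt_const).frequently_zero_iff_eventually_zero.1 hfz
      have hball : ∀ᶠ w in 𝓝 z, dist w z < δ₁ :=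
        Metric.eventually_nhds_iff.2 ⟨δ₁, hδ₁pos, fun x hx => hx⟩
      filter_upwards [hev0, hball] with w h1 h2
      have hwninf : h w ≠ OnePoint.infty := by
        intro hwi
        have h4 := hδ₁ w h2
        rw [hwi, hzc, sphDist_comm] at h4
        rw [hη_def] at h4
        linarith [le_of_eq (rfl : sphDist ((L:ℂ) : OnePoint ℂ) OnePoint.infty = sphDist ((L:ℂ) : OnePoint ℂ) OnePoint.infty)]
      rw [ne_infty_eq_coe hwninf]
      have : val (h w) = L := by linear_combination h1
      rw [this]
  -- T is open
  have hTopen : IsOpen T := by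
    rw [Metric.isOpen_iff]
    rintro z hzT
    obtain ⟨hzB, -⟩ := id hzT
    obtain ⟨δ₀, hδ₀pos, hδ₀⟩ := Metric.eventually_nhds_iff.1 (keyev z hzT)
    obtain ⟨δ₁, hδ₁pos, hδ₁sub⟩ := Metric.isOpen_iff.1 Metric.isOpen_ball z hzB
    refine ⟨min δ₀ δ₁, lt_min hδ₀pos hδ₁pos, fun w hw => ?_⟩
    rw [Metric.mem_ball] at hw
    have hw0 : dist w z < δ₀ := lt_of_lt_of_le hw (min_le_left _ _)
    have hw1 : w ∈ B := hδ₁sub (Metric.mem_ball.2 (lt_of_lt_of_le hw (min_le_right _ _)))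
    refine ⟨hw1, ?_⟩
    have hevw : ∀ᶠ u in 𝓝[≠] w, h u = c := by
      apply Filter.Eventually.filter_mono nhdsWithin_le_nhds
      have hop : IsOpen (Metric.ball z δ₀) := Metric.isOpen_ball
      filter_upwards [hop.mem_nhds (Metric.mem_ball.2 hw0)] with u hu
      exact hδ₀ (Metric.mem_ball.1 hu)
    exact hevw.frequently
  -- B \ T is open
  have hSopen : IsOpen {z : ℂ | z ∈ B ∧ z ∉ T} := by
    rw [Metric.isOpen_iff]
    rintro z ⟨hzB, hzT⟩
    have hnf : ∀ᶠ w in 𝓝[≠] z, h w ≠ c := by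
      by_contra hcon
      refine hzT ⟨hzB, ?_⟩
      have := Filter.not_eventually.1 hcon
      exact this.mono (fun w hw => not_not.1 hw)
    rw [eventually_nhdsWithin_iff] at hnf
    obtain ⟨δ₀, hδ₀pos, hδ₀⟩ := Metric.eventually_nhds_iff.1 hnf
    obtain ⟨δ₁, hδ₁pos, hδ₁sub⟩ := Metric.isOpen_iff.1 Metric.isOpen_ball z hzB
    refine ⟨min δ₀ δ₁, lt_min hδ₀pos hδ₁pos, fun w hw => ?_⟩
    rw [Metric.mem_ball] at hw
    have hw0 : dist w z < δ₀ := lt_of_lt_of_le hw (min_le_left _ _)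
    have hw1 : w ∈ B := hδ₁sub (Metric.mem_ball.2 (lt_of_lt_of_le hw (min_le_right _ _)))
    refine ⟨hw1, fun hwT => ?_⟩
    have hwc : h w = c := key w hwT
    by_cases hwz : w = z
    · subst hwz
      exact hzT hwT
    · exact (hδ₀ hw0 hwz) hwc
  -- conclude by preconnectedness
  have h0T : (0:ℂ) ∈ T := ⟨Metric.mem_ball_self hr, hfreq⟩
  intro z hzB
  by_contra hzc
  have hzT : z ∉ T := fun hT => hzc (key z hT)
  have hpre : IsPreconnected B := (convex_ball (0:ℂ) r'').isPreconnected
  have hsub : B ⊆ T ∪ {z : ℂ | z ∈ B ∧ z ∉ T} := by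
    intro x hx
    by_cases hxT : x ∈ T
    · exact Or.inl hxT
    · exact Or.inr ⟨hx, hxT⟩
  have hne1 : (B ∩ T).Nonempty := ⟨0, Metric.mem_ball_self hr, h0T⟩
  have hne2 : (B ∩ {z : ℂ | z ∈ B ∧ z ∉ T}).Nonempty := ⟨z, hzB, hzB, hzT⟩
  obtain ⟨x, _, hxT, _, hxS⟩ := hpre T _ hTopen hSopen hsub hne1 hne2
  exact hxS hxT



/-! ### Section E1 : properties of the normal limit h -/

lemma limit_contAt {F h : ℂ → OnePoint ℂ} {W : ℕ → ℂ} {r'' : ℝ}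
    (hr''1 : r'' < 1) (hW : ∀ n, norm (W n) < 1)
    (hFc : ∀ a : ℂ, norm a < 1 → SphContAt F a)
    (HK : ∀ ε > 0, ∃ N, ∀ n ≥ N, ∀ ζ ∈ Metric.closedBall (0:ℂ) r'',
      sphDist (F (phiM (W n) ζ)) (h ζ) < ε) :
    ∀ ζ₀ ∈ Metric.ball (0:ℂ) r'', SphContAt h ζ₀ := by
  intro ζ₀ hζ₀ ε hε
  rw [Metric.mem_ball, Complex.dist_eq, sub_zero] at hζ₀
  obtain ⟨N, hN⟩ := HK (ε/3) (by positivity)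
  have hζ₀1 : norm ζ₀ < 1 := lt_trans hζ₀ hr''1
  have himg : norm (phiM (W N) ζ₀) < 1 := abs_phiM_lt_one hζ₀1 (hW N)
  obtain ⟨δ₁, hδ₁pos, hδ₁⟩ := hFc _ himg (ε/3) (by positivity)
  obtain ⟨δ₂, hδ₂pos, hδ₂⟩ := Metric.continuousAt_iff.1 (continuousAt_phiM hζ₀1 (hW N)) δ₁ hδ₁pos
  refine ⟨min δ₂ (r'' - norm ζ₀), lt_min hδ₂pos (by linarith), fun ζ hζ => ?_⟩
  have hζ2 : dist ζ ζ₀ < δ₂ := lt_of_lt_of_le hζ (min_le_left _ _)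
  have hζr : norm ζ ≤ r'' := by
    have h1 : dist ζ ζ₀ < r'' - norm ζ₀ := lt_of_lt_of_le hζ (min_le_right _ _)
    rw [Complex.dist_eq] at h1
    have h2 := norm_add_le (ζ - ζ₀) ζ₀
    simp only [sub_add_cancel] at h2
    linarith
  have hζK : ζ ∈ Metric.closedBall (0:ℂ) r'' := by
    rw [Metric.mem_closedBall, Complex.dist_eq, sub_zero]; exact hζr
  have hζ₀K : ζ₀ ∈ Metric.closedBall (0:ℂ) r'' := by
    rw [Metric.mem_closedBall, Complex.dist_eq, sub_zero]; exact hζ₀.le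
  have t1 : sphDist (F (phiM (W N) ζ)) (h ζ) < ε/3 := hN N le_rfl ζ hζK
  have t3 : sphDist (F (phiM (W N) ζ₀)) (h ζ₀) < ε/3 := hN N le_rfl ζ₀ hζ₀K
  have t2 : sphDist (F (phiM (W N) ζ)) (F (phiM (W N) ζ₀)) < ε/3 := hδ₁ _ (hδ₂ hζ2)
  calc sphDist (h ζ) (h ζ₀)
      ≤ sphDist (h ζ) (F (phiM (W N) ζ)) + sphDist (F (phiM (W N) ζ)) (h ζ₀) := by
        exact sphDist_triangle _ _ _
    _ ≤ sphDist (h ζ) (F (phiM (W N) ζ)) + (sphDist (F (phiM (W N) ζ)) (F (phiM (W N) ζ₀)) +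
        sphDist (F (phiM (W N) ζ₀)) (h ζ₀)) := by
        linarith [sphDist_triangle (F (phiM (W N) ζ)) (F (phiM (W N) ζ₀)) (h ζ₀)]
    _ < ε := by
        rw [sphDist_comm (h ζ)]
        linarith

lemma toSphere_ne_infty_analytic {f : ℂ → ℂ} {u : ℂ} (h : toSphere f u ≠ OnePoint.infty) :
    AnalyticAt ℂ f u := by
  by_contra hc
  exact h (toSphere_of_not_analytic hc)

lemma limit_fin {f : ℂ → ℂ} {h : ℂ → OnePoint ℂ} {W : ℕ → ℂ} {r'' : ℝ}
    (hr''1 : r'' < 1) (hW : ∀ n, norm (W n) < 1)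
    (HK : ∀ ε > 0, ∃ N, ∀ n ≥ N, ∀ ζ ∈ Metric.closedBall (0:ℂ) r'',
      sphDist (toSphere f (phiM (W n) ζ)) (h ζ) < ε)
    (hcont : ∀ ζ₀ ∈ Metric.ball (0:ℂ) r'', SphContAt h ζ₀) :
    ∀ ζ₀ ∈ Metric.ball (0:ℂ) r'', h ζ₀ ≠ OnePoint.infty →
      AnalyticAt ℂ (fun w => val (h w)) ζ₀ := by
  intro ζ₀ hζ₀B hne
  have hζ₀ : norm ζ₀ < r'' := by
    rw [Metric.mem_ball, Complex.dist_eq, sub_zero] at hζ₀B; exact hζ₀B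
  have hζ₀1 : norm ζ₀ < 1 := lt_trans hζ₀ hr''1
  set η := sphDist (h ζ₀) OnePoint.infty with hη_def
  have hηpos : 0 < η := by
    rw [hη_def, ne_infty_eq_coe hne]
    exact sphDist_coe_infty_pos _
  obtain ⟨δ₀, hδ₀pos, hδ₀⟩ := hcont ζ₀ hζ₀B (η/4) (by positivity)
  set δ := min δ₀ ((r'' - norm ζ₀)/2) with hδ_def
  have hδpos : 0 < δ := lt_min hδ₀pos (by linarith)
  -- on the ball of radius δ, h is finite and bounded
  have hfar : ∀ w, dist w ζ₀ < δ → (3*η/4) ≤ sphDist (h w) OnePoint.infty := by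
    intro w hw
    have h1 := hδ₀ w (lt_of_lt_of_le hw (min_le_left _ _))
    have h2 := sphDist_triangle (h ζ₀) (h w) OnePoint.infty
    rw [sphDist_comm (h ζ₀) (h w)] at h2
    linarith
  have hKmem : ∀ w : ℂ, dist w ζ₀ < δ → w ∈ Metric.closedBall (0:ℂ) r'' := by
    intro w hw
    rw [Metric.mem_closedBall, Complex.dist_eq, sub_zero]
    have h1 : dist w ζ₀ < (r'' - norm ζ₀)/2 := lt_of_lt_of_le hw (min_le_right _ _)
    rw [Complex.dist_eq] at h1
    have h2 := norm_add_le (w - ζ₀) ζ₀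
    simp only [sub_add_cancel] at h2
    linarith
  have hbnd : ∀ w, dist w ζ₀ < δ → h w ≠ OnePoint.infty ∧
      norm (val (h w)) ≤ 2/(3*η/4) := by
    intro w hw
    have h1 := hfar w hw
    have hwne : h w ≠ OnePoint.infty := by
      intro hc
      rw [hc, sphDist_infty_infty] at h1
      linarith
    refine ⟨hwne, ?_⟩
    rw [ne_infty_eq_coe hwne] at h1
    exact abs_le_of_sphDist_infty (by positivity) h1
  set M := max (2/(3*η/4)) (2/(η/2)) with hM_def
  have hMpos : 0 < M := lt_max_of_lt_left (by positivity)
  set C := (1 + M^2)/2 with hC_def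
  have hCpos : 0 < C := by positivity
  -- uniform convergence of the finite parts
  have hunif : TendstoUniformlyOn (fun n w => val (toSphere f (phiM (W n) w)))
      (fun w => val (h w)) Filter.atTop (Metric.closedBall ζ₀ (δ/2)) := by
    rw [Metric.tendstoUniformlyOn_iff]
    intro ε' hε'
    obtain ⟨N, hN⟩ := HK (min (η/4) (ε'/(C+1))) (lt_min (by positivity) (by positivity))
    rw [Filter.eventually_atTop]
    refine ⟨N, fun n hn x hx => ?_⟩
    rw [Metric.mem_closedBall] at hx
    have hxδ : dist x ζ₀ < δ := lt_of_le_of_lt hx (by linarith)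
    have hxK := hKmem x hxδ
    have h1 := hN n hn x hxK
    have h2 : sphDist (toSphere f (phiM (W n) x)) (h x) < η/4 :=
      lt_of_lt_of_le h1 (min_le_left _ _)
    have h3 : sphDist (toSphere f (phiM (W n) x)) (h x) < ε'/(C+1) :=
      lt_of_lt_of_le h1 (min_le_right _ _)
    obtain ⟨hxne, hxbd⟩ := hbnd x hxδ
    have hgne : toSphere f (phiM (W n) x) ≠ OnePoint.infty := by
      intro hc
      rw [hc] at h2
      have h4 := hfar x hxδ
      have h5 := sphDist_triangle (h x) OnePoint.infty (h x)
      rw [sphDist_comm OnePoint.infty (h x)] at h2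
      have h6 := sphDist_triangle (h x) (toSphere f (phiM (W n) x)) OnePoint.infty
      rw [hc, sphDist_infty_infty, sphDist_comm (h x)] at h6
      linarith
    have hgfar : η/2 ≤ sphDist (toSphere f (phiM (W n) x)) OnePoint.infty := by
      have h4 := hfar x hxδ
      have h6 := sphDist_triangle (h x) (toSphere f (phiM (W n) x)) OnePoint.infty
      have h7 : sphDist (h x) (toSphere f (phiM (W n) x)) < η/4 := by
        rw [sphDist_comm]; exact h2
      linarith
    have hgbd : norm (val (toSphere f (phiM (W n) x))) ≤ 2/(η/2) := by
      rw [ne_infty_eq_coe hgne] at hgfar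
      exact abs_le_of_sphDist_infty (by positivity) hgfar
    rw [Complex.dist_eq]
    have hxbd' : norm (val (h x)) ≤ M := le_trans hxbd (le_max_left _ _)
    have hgbd' : norm (val (toSphere f (phiM (W n) x))) ≤ M :=
      le_trans hgbd (le_max_right _ _)
    have h7 := abs_sub_le_sphDist hxbd' hgbd'
    have h8 : sphDist ((val (h x) : ℂ) : OnePoint ℂ)
        ((val (toSphere f (phiM (W n) x)) : ℂ) : OnePoint ℂ) < ε'/(C+1) := by
      rw [← ne_infty_eq_coe hxne, ← ne_infty_eq_coe hgne, sphDist_comm]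
      exact h3
    calc norm (val (h x) - val (toSphere f (phiM (W n) x)))
        ≤ C * sphDist ((val (h x) : ℂ) : OnePoint ℂ)
          ((val (toSphere f (phiM (W n) x)) : ℂ) : OnePoint ℂ) := h7
      _ < C * (ε'/(C+1)) := by
          apply mul_lt_mul_of_pos_left h8 hCpos
      _ < ε' := by
          have hlt : C / (C+1) < 1 := by rw [div_lt_one (by linarith)]; linarith
          have he : C * (ε'/(C+1)) = ε' * (C/(C+1)) := by ring
          rw [he]
          nlinarith
  -- each approximant is differentiable on the small ball
  obtain ⟨N₀, hN₀⟩ := HK (η/4) (by positivity)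
  have hdiff : ∀ n ≥ N₀, DifferentiableOn ℂ (fun w => val (toSphere f (phiM (W n) w)))
      (Metric.ball ζ₀ (δ/2)) := by
    intro n hn x hx
    rw [Metric.mem_ball] at hx
    have hxδ : dist x ζ₀ < δ := lt_of_le_of_lt hx.le (by linarith)
    have hxK := hKmem x hxδ
    have hx1 : norm x < 1 := by
      rw [Metric.mem_closedBall, Complex.dist_eq, sub_zero] at hxK
      exact lt_of_le_of_lt hxK hr''1
    have h1 := hN₀ n hn x hxK
    have hgne : toSphere f (phiM (W n) x) ≠ OnePoint.infty := by
      intro hc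
      rw [hc] at h1
      have h4 := hfar x hxδ
      have h6 := sphDist_triangle (h x) OnePoint.infty OnePoint.infty
      rw [sphDist_comm _ (h x)] at h1
      linarith [sphDist_nonneg OnePoint.infty OnePoint.infty]
    have hfan : AnalyticAt ℂ f (phiM (W n) x) := toSphere_ne_infty_analytic hgne
    have hcomp : AnalyticAt ℂ (fun w => f (phiM (W n) w)) x :=
      AnalyticAt.comp hfan (analyticAt_phiM hx1 (hW n))
    have hev : (fun w => f (phiM (W n) w)) =ᶠ[nhds x]
        (fun w => val (toSphere f (phiM (W n) w))) := by
      obtain ⟨ρ, hρpos, hρ⟩ := Metric.eventually_nhds_iff.1 hfan.eventually_analyticAt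
      obtain ⟨ρ₂, hρ₂pos, hρ₂⟩ := Metric.continuousAt_iff.1
        (continuousAt_phiM hx1 (hW n)) ρ hρpos
      filter_upwards [Metric.ball_mem_nhds x hρ₂pos] with y hy
      rw [toSphere_of_analytic (hρ (hρ₂ (Metric.mem_ball.1 hy)))]
      rfl
    exact ((hcomp.congr hev).differentiableAt).differentiableWithinAt
  -- conclude
  have hloc : TendstoLocallyUniformlyOn (fun n w => val (toSphere f (phiM (W n) w)))
      (fun w => val (h w)) Filter.atTop (Metric.ball ζ₀ (δ/2)) :=
    (hunif.tendstoLocallyUniformlyOn).mono Metric.ball_subset_closedBall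
  have hdiff' : DifferentiableOn ℂ (fun w => val (h w)) (Metric.ball ζ₀ (δ/2)) := by
    apply hloc.differentiableOn _ Metric.isOpen_ball
    rw [Filter.eventually_atTop]
    exact ⟨N₀, hdiff⟩
  exact hdiff'.analyticAt (Metric.isOpen_ball.mem_nhds (Metric.mem_ball_self (by positivity)))



lemma limit_inf {p : ℂ} (γ : SimpleCurve p) {f : ℂ → ℂ} {h : ℂ → OnePoint ℂ} {W : ℕ → ℂ}
    {r'' : ℝ} (hr''1 : r'' < 1) (hW : ∀ n, norm (W n) < 1)
    (hf : MeromorphicOn f unitDisc)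
    (hnorm : NormalAlong (toSphere f) γ.carrier unitDisc)
    (HK : ∀ ε > 0, ∃ N, ∀ n ≥ N, ∀ ζ ∈ Metric.closedBall (0:ℂ) r'',
      sphDist (toSphere f (phiM (W n) ζ)) (h ζ) < ε)
    (hcont : ∀ ζ₀ ∈ Metric.ball (0:ℂ) r'', SphContAt h ζ₀) :
    ∀ ζ₀ ∈ Metric.ball (0:ℂ) r'', h ζ₀ = OnePoint.infty →
      AnalyticAt ℂ (fun w => ival (h w)) ζ₀ := by
  intro ζ₀ hζ₀B hinfty
  have hζ₀ : norm ζ₀ < r'' := by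
    rw [Metric.mem_ball, Complex.dist_eq, sub_zero] at hζ₀B; exact hζ₀B
  have hζ₀1 : norm ζ₀ < 1 := lt_trans hζ₀ hr''1
  obtain ⟨δ₀, hδ₀pos, hδ₀⟩ := hcont ζ₀ hζ₀B (1/8) (by norm_num)
  set δ := min δ₀ ((r'' - norm ζ₀)/2) with hδ_def
  have hδpos : 0 < δ := lt_min hδ₀pos (by linarith)
  have hfar : ∀ w, dist w ζ₀ < δ → sphDist (h w) OnePoint.infty < 1/8 := by
    intro w hw
    have h1 := hδ₀ w (lt_of_lt_of_le hw (min_le_left _ _))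
    rwa [hinfty] at h1
  have hKmem : ∀ w : ℂ, dist w ζ₀ < δ → w ∈ Metric.closedBall (0:ℂ) r'' := by
    intro w hw
    rw [Metric.mem_closedBall, Complex.dist_eq, sub_zero]
    have h1 : dist w ζ₀ < (r'' - norm ζ₀)/2 := lt_of_lt_of_le hw (min_le_right _ _)
    rw [Complex.dist_eq] at h1
    have h2 := norm_add_le (w - ζ₀) ζ₀
    simp only [sub_add_cancel] at h2
    linarith
  have hbig : ∀ x : OnePoint ℂ, sphDist x OnePoint.infty ≤ 1/4 → Big x := by
    intro x hx
    by_cases hxi : x = OnePoint.infty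
    · exact Or.inl hxi
    · right
      refine ⟨hxi, ?_⟩
      rw [ne_infty_eq_coe hxi] at hx
      have := one_div_le_abs_of_sphDist_infty (by norm_num : (0:ℝ) < 1/4) (by norm_num) hx
      linarith
  have hbig_h : ∀ w, dist w ζ₀ < δ → Big (h w) := fun w hw => hbig _ (by linarith [hfar w hw])
  -- uniform convergence of inverted parts
  have hunif : TendstoUniformlyOn (fun n w => ival (toSphere f (phiM (W n) w)))
      (fun w => ival (h w)) Filter.atTop (Metric.closedBall ζ₀ (δ/2)) := by
    rw [Metric.tendstoUniformlyOn_iff]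
    intro ε' hε'
    obtain ⟨N, hN⟩ := HK (min (1/8) ε') (lt_min (by norm_num) hε')
    rw [Filter.eventually_atTop]
    refine ⟨N, fun n hn x hx => ?_⟩
    rw [Metric.mem_closedBall] at hx
    have hxδ : dist x ζ₀ < δ := lt_of_le_of_lt hx (by linarith)
    have hxK := hKmem x hxδ
    have h1 := hN n hn x hxK
    have h2 : sphDist (toSphere f (phiM (W n) x)) (h x) < 1/8 :=
      lt_of_lt_of_le h1 (min_le_left _ _)
    have h3 : sphDist (toSphere f (phiM (W n) x)) (h x) < ε' :=
      lt_of_lt_of_le h1 (min_le_right _ _)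
    have hgfar : sphDist (toSphere f (phiM (W n) x)) OnePoint.infty ≤ 1/4 := by
      have h4 := hfar x hxδ
      have h6 := sphDist_triangle (toSphere f (phiM (W n) x)) (h x) OnePoint.infty
      linarith
    have hbg : Big (toSphere f (phiM (W n) x)) := hbig _ hgfar
    have hbh : Big (h x) := hbig_h x hxδ
    rw [Complex.dist_eq]
    calc norm (ival (h x) - ival (toSphere f (phiM (W n) x)))
        ≤ sphDist (h x) (toSphere f (phiM (W n) x)) := ival_lipschitz hbh hbg
      _ < ε' := by rw [sphDist_comm]; exact h3
  obtain ⟨N₀, hN₀⟩ := HK (1/8) (by norm_num)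
  have hdiff : ∀ n ≥ N₀, DifferentiableOn ℂ (fun w => ival (toSphere f (phiM (W n) w)))
      (Metric.ball ζ₀ (δ/2)) := by
    intro n hn x hx
    rw [Metric.mem_ball] at hx
    have hxδ : dist x ζ₀ < δ := lt_of_le_of_lt hx.le (by linarith)
    have hxK := hKmem x hxδ
    have hx1 : norm x < 1 := by
      rw [Metric.mem_closedBall, Complex.dist_eq, sub_zero] at hxK
      exact lt_of_le_of_lt hxK hr''1
    have h1 := hN₀ n hn x hxK
    have hgfar : sphDist (toSphere f (phiM (W n) x)) OnePoint.infty ≤ 1/4 := by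
      have h4 := hfar x hxδ
      have h6 := sphDist_triangle (toSphere f (phiM (W n) x)) (h x) OnePoint.infty
      linarith
    set u := phiM (W n) x with hu_def
    have hu1 : norm u < 1 := abs_phiM_lt_one hx1 (hW n)
    have huD : u ∈ unitDisc := hu1
    by_cases hfan : AnalyticAt ℂ f u
    · -- finite case: f is analytic and large at u
      have hts : toSphere f u = ((f u : ℂ) : OnePoint ℂ) := toSphere_of_analytic hfan
      have hfu4 : 4 ≤ norm (f u) := by
        rw [hts] at hgfar
        have := one_div_le_abs_of_sphDist_infty (by norm_num : (0:ℝ) < 1/4) (by norm_num) hgfar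
        simpa using this
      have hfune : f u ≠ 0 := by
        intro h0; rw [h0] at hfu4; simp at hfu4; linarith
      have hc1 : AnalyticAt ℂ (fun y => f (phiM (W n) y)) x :=
        AnalyticAt.comp hfan (analyticAt_phiM hx1 (hW n))
      have hcomp : AnalyticAt ℂ (fun y => (f (phiM (W n) y))⁻¹) x := hc1.inv hfune
      have hev : (fun y => (f (phiM (W n) y))⁻¹) =ᶠ[nhds x]
          (fun y => ival (toSphere f (phiM (W n) y))) := by
        have hevan : ∀ᶠ v in nhds u, AnalyticAt ℂ f v := hfan.eventually_analyticAt
        have hevne : ∀ᶠ v in nhds u, f v ≠ 0 := by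
          have hc := hfan.continuousAt
          have : ∀ᶠ v in nhds u, f v ∈ {y : ℂ | y ≠ 0} := by
            apply hc.eventually_mem
            exact isOpen_ne.mem_nhds hfune
          exact this
        obtain ⟨ρ, hρpos, hρ⟩ := Metric.eventually_nhds_iff.1 (hevan.and hevne)
        obtain ⟨ρ₂, hρ₂pos, hρ₂⟩ := Metric.continuousAt_iff.1
          (continuousAt_phiM hx1 (hW n)) ρ hρpos
        filter_upwards [Metric.ball_mem_nhds x hρ₂pos] with y hy
        obtain ⟨ha, _⟩ := hρ (hρ₂ (Metric.mem_ball.1 hy))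
        rw [toSphere_of_analytic ha]
        rfl
      exact ((hcomp.congr hev).differentiableAt).differentiableWithinAt
    · -- pole case
      obtain ⟨m, g, hg, hgne, hev⟩ := no_garbage γ f hnorm hu1 (hf u huD) hfan
      have hρ₂pre : AnalyticAt ℂ g (phiM (W n) x) := hg
      have hgne0 : g (phiM (W n) x) ≠ 0 := hgne
      have hc1 : AnalyticAt ℂ (fun y => (phiM (W n) y - u) ^ (m+1)) x :=
        ((analyticAt_phiM hx1 (hW n)).sub analyticAt_const).pow (m+1)
      have hc2 : AnalyticAt ℂ (fun y => g (phiM (W n) y)) x :=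
        AnalyticAt.comp (hρ₂pre) (analyticAt_phiM hx1 (hW n))
      have hcomp : AnalyticAt ℂ (fun y => (phiM (W n) y - u) ^ (m+1) * (g (phiM (W n) y))⁻¹) x :=
        hc1.mul (hc2.inv hgne0)
      -- local data around u
      obtain ⟨ρ₁, hρ₁pos, hρ₁⟩ : ∃ ρ > 0, ∀ v, dist v u < ρ → v ≠ u →
          f v = (v - u) ^ (-(m + 1 : ℕ) : ℤ) * g v := by
        have h1 := eventually_nhdsWithin_iff.1 hev
        obtain ⟨ρ, hρpos, hρ⟩ := Metric.eventually_nhds_iff.1 h1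
        exact ⟨ρ, hρpos, fun v hv hne => hρ hv hne⟩
      obtain ⟨ρ₂, hρ₂pos, hρ₂⟩ : ∃ ρ > 0, ∀ v, dist v u < ρ →
          AnalyticAt ℂ g v ∧ g v ≠ 0 := by
        have hevne : ∀ᶠ v in nhds u, g v ≠ 0 := by
          have h9 : ∀ᶠ v in nhds u, g v ∈ {y : ℂ | y ≠ 0} :=
            hg.continuousAt.eventually_mem (isOpen_ne.mem_nhds hgne)
          exact h9
        obtain ⟨ρ, hρpos, hρ⟩ := Metric.eventually_nhds_iff.1
          (hg.eventually_analyticAt.and hevne)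
        exact ⟨ρ, hρpos, hρ⟩
      set ρ := min ρ₁ ρ₂ with hρ_def
      have hρpos : 0 < ρ := lt_min hρ₁pos hρ₂pos
      obtain ⟨ρ₃, hρ₃pos, hρ₃⟩ := Metric.continuousAt_iff.1
        (continuousAt_phiM hx1 (hW n)) ρ hρpos
      have hevq : (fun y => (phiM (W n) y - u) ^ (m+1) * (g (phiM (W n) y))⁻¹) =ᶠ[nhds x]
          (fun y => ival (toSphere f (phiM (W n) y))) := by
        filter_upwards [Metric.ball_mem_nhds x hρ₃pos] with y hy
        have hvρ : dist (phiM (W n) y) u < ρ := hρ₃ (Metric.mem_ball.1 hy)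
        set v := phiM (W n) y with hv_def
        by_cases hvu : v = u
        · rw [hvu, toSphere_of_not_analytic hfan]
          simp
        · have hv1 : dist v u < ρ₁ := lt_of_lt_of_le hvρ (min_le_left _ _)
          have hv2 : dist v u < ρ₂ := lt_of_lt_of_le hvρ (min_le_right _ _)
          obtain ⟨hgan, hgnev⟩ := hρ₂ v hv2
          have hvne0 : v - u ≠ 0 := sub_ne_zero.2 hvu
          have hfval : f v = (v - u) ^ (-(m + 1 : ℕ) : ℤ) * g v := hρ₁ v hv1 hvu
          have hfanv : AnalyticAt ℂ f v := by
            have h1 : AnalyticAt ℂ (fun v' => ((v' - u) ^ (m + 1 : ℕ))⁻¹ * g v') v :=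
              (((analyticAt_id.sub analyticAt_const).pow (m+1)).inv
                (pow_ne_zero _ hvne0)).mul hgan
            apply h1.congr
            have hV : IsOpen (Metric.ball u ρ \ {u}) := Metric.isOpen_ball.sdiff isClosed_singleton
            have hvV : v ∈ Metric.ball u ρ \ {u} := ⟨Metric.mem_ball.2 hvρ, hvu⟩
            filter_upwards [hV.mem_nhds hvV] with z ⟨hz1, hz2⟩
            rw [hρ₁ z (lt_of_lt_of_le (Metric.mem_ball.1 hz1) (min_le_left _ _)) hz2]
            rw [zpow_neg, zpow_natCast]
          rw [toSphere_of_analytic hfanv]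
          show (v - u) ^ (m+1) * (g v)⁻¹ = (f v)⁻¹
          rw [hfval, zpow_neg, zpow_natCast, mul_inv, inv_inv]
      exact ((hcomp.congr hevq).differentiableAt).differentiableWithinAt
  have hloc : TendstoLocallyUniformlyOn (fun n w => ival (toSphere f (phiM (W n) w)))
      (fun w => ival (h w)) Filter.atTop (Metric.ball ζ₀ (δ/2)) :=
    (hunif.tendstoLocallyUniformlyOn).mono Metric.ball_subset_closedBall
  have hdiff' : DifferentiableOn ℂ (fun w => ival (h w)) (Metric.ball ζ₀ (δ/2)) := by
    apply hloc.differentiableOn _ Metric.isOpen_ball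
    rw [Filter.eventually_atTop]
    exact ⟨N₀, hdiff⟩
  exact hdiff'.analyticAt (Metric.isOpen_ball.mem_nhds (Metric.mem_ball_self (by positivity)))



lemma circle_point {θ : ℝ} (γ : SimpleCurve (Complex.exp (θ * Complex.I))) {f : ℂ → ℂ}
    {c : OnePoint ℂ}
    (hlim : Filter.Tendsto (fun t => sphDist (toSphere f (γ.toFun t)) c)
      (nhdsWithin 1 (Set.Ico 0 1)) (nhds 0))
    {h : ℂ → OnePoint ℂ} {T : ℕ → ℝ} {r r'' : ℝ}
    (hr0 : 0 < r) (hrr'' : r < r'') (hr''1 : r'' < 1)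
    (hT : ∀ n, T n ∈ Set.Ico (0:ℝ) 1) (hT1 : Filter.Tendsto T Filter.atTop (nhds 1))
    (HK : ∀ ε > 0, ∃ N, ∀ n ≥ N, ∀ ζ ∈ Metric.closedBall (0:ℂ) r'',
      sphDist (toSphere f (phiM (γ.toFun (T n)) ζ)) (h ζ) < ε)
    (hcont : ∀ ζ₀ ∈ Metric.ball (0:ℂ) r'', SphContAt h ζ₀)
    {s : ℝ} (hs0 : 0 < s) (hsr : s ≤ r) :
    ∃ ξ : ℂ, norm ξ = s ∧ h ξ = c := by
  have hs1 : s < 1 := lt_of_le_of_lt hsr (lt_trans hrr'' hr''1)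
  haveI hNB : (nhdsWithin (1:ℝ) (Set.Ico (0:ℝ) 1)).NeBot := by
    apply mem_closure_iff_nhdsWithin_neBot.1
    rw [closure_Ico (by norm_num : (0:ℝ) ≠ 1)]
    exact ⟨by norm_num, le_refl 1⟩
  have tail : ∀ ε > 0, ∃ t₀ : ℝ, t₀ < 1 ∧ ∀ τ, τ ∈ Set.Ico (0:ℝ) 1 → t₀ < τ →
      sphDist (toSphere f (γ.toFun τ)) c < ε := by
    intro ε hε
    have h1 : ∀ᶠ τ in nhdsWithin 1 (Set.Ico (0:ℝ) 1),
        sphDist (toSphere f (γ.toFun τ)) c < ε := hlim.eventually_lt_const hε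
    rw [eventually_nhdsWithin_iff] at h1
    obtain ⟨δ, hδpos, hδ⟩ := Metric.eventually_nhds_iff.1 h1
    refine ⟨1 - δ, by linarith, fun τ hτIco hτgt => ?_⟩
    have hd : dist τ 1 < δ := by
      rw [Real.dist_eq, abs_lt]
      constructor <;> [linarith; linarith [hτIco.2]]
    exact hδ hd hτIco
  have habsp : norm (Complex.exp (θ * Complex.I)) = 1 := by
    simpa using Complex.norm_exp_ofReal_mul_I θ
  have habs_tend : Filter.Tendsto (fun τ => norm (γ.toFun τ))
      (nhdsWithin 1 (Set.Ico (0:ℝ) 1)) (nhds 1) := by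
    have h2 := (continuous_norm.tendsto (Complex.exp (θ * Complex.I))).comp γ.tends
    rwa [habsp] at h2
  have habs1 : Filter.Tendsto (fun τ => 1 - norm (γ.toFun τ)^2)
      (nhdsWithin 1 (Set.Ico (0:ℝ) 1)) (nhds 0) := by
    have h3 := (habs_tend.mul habs_tend).const_sub (1:ℝ)
    simp only [pow_two]
    simpa using h3
  -- step A : approximate circle points
  have key2 : ∀ ε > 0, ∃ ξ : ℂ, norm ξ = s ∧ sphDist (h ξ) c < ε := by
    intro ε hε
    obtain ⟨N₁, hN₁⟩ := HK (ε/2) (by positivity)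
    obtain ⟨t₀, ht₀1, ht₀⟩ := tail (ε/2) (by positivity)
    obtain ⟨n, hnN, hnt⟩ := ((Filter.eventually_ge_atTop N₁).and
      (hT1.eventually_const_lt ht₀1)).exists
    set tn := T n with htn_def
    set Wn := γ.toFun (T n) with hWn_def
    have hWdisc : norm Wn < 1 := γ.inDisc _ (hT n)
    have hWpos : 0 < 1 - norm Wn := by linarith
    have hW2pos : 0 < 1 - norm Wn ^ 2 := by nlinarith [norm_nonneg Wn]
    set β := (1 - s^2) * (1 - norm Wn)^2 / (1 - norm Wn^2) with hβ_def
    have hβpos : 0 < β := by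
      apply div_pos _ hW2pos
      apply mul_pos (by nlinarith) (by nlinarith)
    have hevτ := habs1.eventually_lt_const hβpos
    have hevτ2 : ∀ᶠ τ in nhdsWithin (1:ℝ) (Set.Ico (0:ℝ) 1), tn < τ :=
      (eventually_gt_nhds (hT n).2).filter_mono nhdsWithin_le_nhds
    have hevmem : ∀ᶠ τ in nhdsWithin (1:ℝ) (Set.Ico (0:ℝ) 1), τ ∈ Set.Ico (0:ℝ) 1 :=
      eventually_mem_nhdsWithin
    obtain ⟨τ', hτ'β, hτ'gt, hτ'mem⟩ := (hevτ.and (hevτ2.and hevmem)).exists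
    have hγτ'1 : norm (γ.toFun τ') < 1 := γ.inDisc _ hτ'mem
    have hsdph : s < dph (γ.toFun τ') Wn := by
      apply dph_gt hγτ'1 hWdisc hs0.le hs1
      have := (lt_div_iff₀ hW2pos).1 hτ'β
      linarith
    set F : ℝ → ℝ := fun τ => dph (γ.toFun τ) Wn with hF_def
    have hIccsub : Set.Icc tn τ' ⊆ Set.Ico (0:ℝ) 1 :=
      fun τ hτ => ⟨le_trans (hT n).1 hτ.1, lt_of_le_of_lt hτ.2 hτ'mem.2⟩
    have hFc : ContinuousOn F (Set.Icc tn τ') := by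
      have : F = fun τ => norm ((γ.toFun τ - Wn) / (1 - γ.toFun τ * (starRingEnd ℂ) Wn)) := rfl
      rw [this]
      apply continuous_norm.comp_continuousOn
      apply ContinuousOn.div
      · exact (γ.cont.mono hIccsub).sub continuousOn_const
      · exact continuousOn_const.sub ((γ.cont.mono hIccsub).mul continuousOn_const)
      · intro τ hτ
        exact one_sub_ne (γ.inDisc _ (hIccsub hτ)) hWdisc
    have hFtn : F tn = 0 := by
      have h9 : F tn = dph Wn Wn := rfl
      rw [h9]
      exact dph_self Wn
    have hs_mem : s ∈ Set.Icc (F tn) (F τ') := ⟨by rw [hFtn]; exact hs0.le, le_of_lt hsdph⟩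
    obtain ⟨τ, hτmem, hFτ⟩ := intermediate_value_Icc (le_of_lt hτ'gt) hFc hs_mem
    set ξ := psi Wn (γ.toFun τ) with hξ_def
    have hγτ1 : norm (γ.toFun τ) < 1 := γ.inDisc _ (hIccsub hτmem)
    have hξabs : norm ξ = s := by
      rw [hξ_def, abs_psi_eq_dph]
      exact hFτ
    have hξK : ξ ∈ Metric.closedBall (0:ℂ) r'' := by
      rw [Metric.mem_closedBall, Complex.dist_eq, sub_zero, hξabs]
      linarith
    have hphiξ : phiM Wn ξ = γ.toFun τ := phiM_psi hγτ1 hWdisc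
    have hval : sphDist (toSphere f (γ.toFun τ)) c < ε/2 :=
      ht₀ τ (hIccsub hτmem) (lt_of_lt_of_le hnt hτmem.1)
    have happ := hN₁ n hnN ξ hξK
    rw [← hWn_def, hphiξ] at happ
    refine ⟨ξ, hξabs, ?_⟩
    calc sphDist (h ξ) c ≤ sphDist (h ξ) (toSphere f (γ.toFun τ)) +
        sphDist (toSphere f (γ.toFun τ)) c := sphDist_triangle _ _ _
      _ < ε/2 + ε/2 := by
          rw [sphDist_comm (h ξ)]
          exact add_lt_add happ hval
      _ = ε := by ring
  -- step B : compactness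
  have hchoice : ∀ k : ℕ, ∃ ξ : ℂ, norm ξ = s ∧ sphDist (h ξ) c < 1/(k+1) := by
    intro k
    apply key2
    positivity
  choose ξs hξs1 hξs2 using hchoice
  have hsph : ∀ k, ξs k ∈ Metric.sphere (0:ℂ) s := by
    intro k
    rw [Metric.mem_sphere, Complex.dist_eq, sub_zero]
    exact hξs1 k
  obtain ⟨ξ, hξmem, ψ, hψ, hconv⟩ := (isCompact_sphere (0:ℂ) s).tendsto_subseq hsph
  have hξabs : norm ξ = s := by
    rw [Metric.mem_sphere, Complex.dist_eq, sub_zero] at hξmem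
    exact hξmem
  have hξball : ξ ∈ Metric.ball (0:ℂ) r'' := by
    rw [Metric.mem_ball, Complex.dist_eq, sub_zero, hξabs]
    linarith
  have hle : ∀ ε > 0, sphDist (h ξ) c < ε := by
    intro ε hε
    obtain ⟨δ, hδpos, hδ⟩ := hcont ξ hξball (ε/2) (by positivity)
    have hev1 : ∀ᶠ k in Filter.atTop, dist (ξs (ψ k)) ξ < δ :=
      Metric.tendsto_nhds.1 hconv δ hδpos
    have hev2 : ∀ᶠ k in Filter.atTop, (1:ℝ)/(ψ k + 1) < ε/2 := by
      have h1 : Filter.Tendsto (fun k => (1:ℝ)/(ψ k + 1)) Filter.atTop (nhds 0) :=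
        tendsto_one_div_add_atTop_nhds_zero_nat.comp hψ.tendsto_atTop
      exact h1.eventually_lt_const (by positivity)
    obtain ⟨k, hk1, hk2⟩ := (hev1.and hev2).exists
    calc sphDist (h ξ) c ≤ sphDist (h ξ) (h (ξs (ψ k))) + sphDist (h (ξs (ψ k))) c :=
          sphDist_triangle _ _ _
      _ < ε/2 + ε/2 := by
          apply add_lt_add
          · rw [sphDist_comm]
            exact hδ _ hk1
          · exact lt_trans (hξs2 (ψ k)) hk2
      _ = ε := by ring
  have h0 : sphDist (h ξ) c = 0 := by
    by_contra hne
    have hpos : 0 < sphDist (h ξ) c :=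
      lt_of_le_of_ne (sphDist_nonneg _ _) (Ne.symm hne)
    exact absurd (hle _ hpos) (lt_irrefl _)
  exact ⟨ξ, hξabs, sphDist_eq_zero_iff.1 h0⟩


end LV


theorem stmt_14 (θ : ℝ) (γ : SimpleCurve (Complex.exp (θ * Complex.I)))
    (f : ℂ → ℂ) (hf : MeromorphicOn f unitDisc) (c : OnePoint ℂ)
    (hnorm : NormalAlong (toSphere f) γ.carrier unitDisc)
    (hlim : Filter.Tendsto (fun t => sphDist (toSphere f (γ.toFun t)) c)
      (nhdsWithin 1 (Set.Ico 0 1)) (nhds 0)) :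
    ∀ r : ℝ, 0 < r → r < 1 →
      clusterSet (toSphere f) (Delta r γ.carrier) (Complex.exp (θ * Complex.I)) = {c} := by
  intro r hr0 hr1
  have hp_abs : norm (Complex.exp (θ * Complex.I)) = 1 := by
    simpa using Complex.norm_exp_ofReal_mul_I θ
  apply Set.eq_singleton_iff_unique_mem.2
  constructor
  · -- `c` belongs to the cluster set
    set u : ℕ → ℝ := fun n => 1 - 1/(n+2) with hu_def
    have hu_mem : ∀ n : ℕ, u n ∈ Set.Ico (0:ℝ) 1 := by
      intro n
      constructor
      · have h1 : (1:ℝ)/(n+2) ≤ 1/2 := by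
          apply div_le_div_of_nonneg_left (by norm_num) (by norm_num)
          have := Nat.cast_nonneg (α := ℝ) n
          linarith
        simp only [hu_def]
        linarith
      · have h1 : (0:ℝ) < 1/(n+2) := by positivity
        simp only [hu_def]
        linarith
    have hu_tend : Filter.Tendsto u Filter.atTop (nhds 1) := by
      have h1 : Filter.Tendsto (fun n : ℕ => ((n:ℝ)+2)) Filter.atTop Filter.atTop :=
        tendsto_atTop_add_const_right _ 2 tendsto_natCast_atTop_atTop
      have h0 := h1.inv_tendsto_atTop
      have h0' : Filter.Tendsto (fun n : ℕ => (1:ℝ)/((n:ℝ)+2)) Filter.atTop (nhds 0) := by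
        simpa [one_div, Pi.inv_def] using h0
      have h2 := h0'.const_sub (1:ℝ)
      rw [sub_zero] at h2
      exact h2
    have hu_tendW : Filter.Tendsto u Filter.atTop (nhdsWithin 1 (Set.Ico (0:ℝ) 1)) :=
      tendsto_nhdsWithin_of_tendsto_nhds_of_eventually_within _ hu_tend
        (Filter.Eventually.of_forall hu_mem)
    refine ⟨fun n => γ.toFun (u n), fun n => ?_, γ.tends.comp hu_tendW, hlim.comp hu_tendW⟩
    apply Set.mem_biUnion (show γ.toFun (u n) ∈ γ.carrier from ⟨u n, hu_mem n, rfl⟩)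
    exact ⟨γ.inDisc _ (hu_mem n), by rw [LV.dph_self]; exact hr0.le⟩
  · rintro c' ⟨z, hzA, hztend, hzlim⟩
    have hzsel : ∀ n : ℕ, ∃ w, w ∈ γ.carrier ∧ z n ∈ unitDisc ∧ dph (z n) w ≤ r := by
      intro n
      have h1 := hzA n
      simp only [Delta, Set.mem_iUnion, Set.mem_setOf_eq] at h1
      obtain ⟨w, hw1, hw2, hw3⟩ := h1
      exact ⟨w, hw1, hw2, hw3⟩
    choose w hwγ hzD hzdph using hzsel
    have hzd : ∀ n, norm (z n) < 1 := fun n => hzD n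
    have hwsel : ∀ n : ℕ, ∃ t, t ∈ Set.Ico (0:ℝ) 1 ∧ γ.toFun t = w n := by
      intro n
      obtain ⟨t, ht, hteq⟩ := hwγ n
      exact ⟨t, ht, hteq⟩
    choose T hT hTeq using hwsel
    have hwd : ∀ n, norm (w n) < 1 := fun n => by
      rw [← hTeq n]; exact γ.inDisc _ (hT n)
    have habs_z : Filter.Tendsto (fun n => norm (z n)) Filter.atTop (nhds 1) := by
      have h1 := (continuous_norm.tendsto (Complex.exp (θ * Complex.I))).comp hztend
      rwa [hp_abs] at h1
    have hwp : Filter.Tendsto w Filter.atTop (nhds (Complex.exp (θ * Complex.I))) := by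
      have hbd : ∀ n, norm (z n - w n) ≤ r * (1 - norm (z n)^2) / (1 - r) := by
        intro n
        have h1 := LV.abs_sub_le_of_dph_le (hzd n) (hwd n) hr0.le (hzdph n)
        have h2 : 1 - r ≤ 1 - r * norm (z n) := by
          nlinarith [norm_nonneg (z n), hzd n]
        rw [le_div_iff₀ (by linarith : (0:ℝ) < 1 - r)]
        nlinarith [norm_nonneg (z n - w n)]
      have hb0 : Filter.Tendsto (fun n => r * (1 - norm (z n)^2) / (1-r))
          Filter.atTop (nhds 0) := by
        have h3 : Filter.Tendsto (fun n => 1 - norm (z n)^2) Filter.atTop (nhds 0) := by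
          have h4 := (habs_z.mul habs_z).const_sub (1:ℝ)
          simp only [pow_two]
          simpa using h4
        have h5 := (h3.const_mul r).div_const (1-r)
        simpa using h5
      have hzw0 : Filter.Tendsto (fun n => z n - w n) Filter.atTop (nhds 0) := by
        apply squeeze_zero_norm _ hb0
        intro n
        exact hbd n
      have h3 := hztend.sub hzw0
      simp only [sub_sub_cancel, sub_zero] at h3
      exact h3
    have hT1 : Filter.Tendsto T Filter.atTop (nhds 1) := by
      rw [Metric.tendsto_atTop]
      intro ε hε
      by_contra hcon
      push_neg at hcon
      have hfreq : ∃ᶠ n in Filter.atTop, ε ≤ dist (T n) 1 := by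
        rw [Filter.frequently_atTop]
        intro N
        obtain ⟨n, hn1, hn2⟩ := hcon N
        exact ⟨n, hn1, hn2⟩
      obtain ⟨ψ, hψmono, hψ⟩ := Filter.extraction_of_frequently_atTop hfreq
      have hmem : ∀ k, T (ψ k) ∈ Set.Icc (0:ℝ) (1 - ε) := by
        intro k
        have h1 := hψ k
        rw [Real.dist_eq, abs_sub_comm, _root_.abs_of_nonneg (by linarith [(hT (ψ k)).2])] at h1
        exact ⟨(hT (ψ k)).1, by linarith⟩
      obtain ⟨tstar, htstar, ψ₂, hψ₂, hconv⟩ := isCompact_Icc.tendsto_subseq hmem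
      have htstarIco : tstar ∈ Set.Ico (0:ℝ) 1 := ⟨htstar.1, by linarith [htstar.2]⟩
      have hγconv : Filter.Tendsto (fun k => γ.toFun (T (ψ (ψ₂ k)))) Filter.atTop
          (nhds (γ.toFun tstar)) := by
        apply ((γ.cont.continuousWithinAt htstarIco).tendsto).comp
        apply tendsto_nhdsWithin_of_tendsto_nhds_of_eventually_within _ hconv
        exact Filter.Eventually.of_forall (fun k => hT _)
      have hwconv : Filter.Tendsto (fun k => γ.toFun (T (ψ (ψ₂ k)))) Filter.atTop
          (nhds (Complex.exp (θ * Complex.I))) := by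
        have h4 : Filter.Tendsto (fun k => w (ψ (ψ₂ k))) Filter.atTop
            (nhds (Complex.exp (θ * Complex.I))) :=
          hwp.comp ((hψmono.comp hψ₂).tendsto_atTop)
        have h5 : (fun k => γ.toFun (T (ψ (ψ₂ k)))) = fun k => w (ψ (ψ₂ k)) :=
          funext (fun k => hTeq _)
        rw [h5]
        exact h4
      have heq := tendsto_nhds_unique hγconv hwconv
      have h6 : norm (γ.toFun tstar) < 1 := γ.inDisc _ htstarIco
      rw [heq, hp_abs] at h6
      exact absurd h6 (lt_irrefl _)
    obtain ⟨φ, hφ, h, H⟩ := hnorm w hwγ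
    set r'' := (r+1)/2 with hr''_def
    have hrr'' : r < r'' := by simp only [hr''_def]; linarith
    have hr''1 : r'' < 1 := by simp only [hr''_def]; linarith
    have hr''0 : 0 < r'' := by simp only [hr''_def]; linarith
    have hK_sub : Metric.closedBall (0:ℂ) r'' ⊆ unitDisc := by
      intro x hx
      rw [Metric.mem_closedBall, Complex.dist_eq, sub_zero] at hx
      exact lt_of_le_of_lt hx hr''1
    have HK : ∀ ε > 0, ∃ N, ∀ n ≥ N, ∀ ζ ∈ Metric.closedBall (0:ℂ) r'',
        sphDist (toSphere f (phiM (w (φ n)) ζ)) (h ζ) < ε :=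
      fun ε hε => H _ hK_sub (isCompact_closedBall 0 r'') ε hε
    have hWd : ∀ n : ℕ, norm (w (φ n)) < 1 := fun n => hwd (φ n)
    have hFc : ∀ a : ℂ, norm a < 1 → LV.SphContAt (toSphere f) a :=
      fun a ha => LV.toSphere_contAt γ f hf hnorm ha
    have hcont := LV.limit_contAt (W := fun n => w (φ n)) hr''1 hWd hFc HK
    have hfin := LV.limit_fin (W := fun n => w (φ n)) hr''1 hWd HK hcont
    have hinf := LV.limit_inf (W := fun n => w (φ n)) γ hr''1 hWd hf hnorm HK hcont
    have hTφ : ∀ n : ℕ, T (φ n) ∈ Set.Ico (0:ℝ) 1 := fun n => hT (φ n)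
    have hTφ1 : Filter.Tendsto (fun n => T (φ n)) Filter.atTop (nhds 1) :=
      hT1.comp hφ.tendsto_atTop
    have HKφ : ∀ ε > 0, ∃ N, ∀ n ≥ N, ∀ ζ ∈ Metric.closedBall (0:ℂ) r'',
        sphDist (toSphere f (phiM (γ.toFun (T (φ n))) ζ)) (h ζ) < ε := by
      intro ε hε
      obtain ⟨N, hN⟩ := HK ε hε
      refine ⟨N, fun n hn ζ hζ => ?_⟩
      rw [hTeq (φ n)]
      exact hN n hn ζ hζ
    have hcirc : ∀ s : ℝ, 0 < s → s ≤ r → ∃ ξ : ℂ, norm ξ = s ∧ h ξ = c :=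
      fun s hs0 hsr =>
        LV.circle_point γ hlim hr0 hrr'' hr''1 hTφ hTφ1 HKφ hcont hs0 hsr
    have hfreq : ∃ᶠ ξ in nhdsWithin (0:ℂ) {(0:ℂ)}ᶜ, h ξ = c := by
      rw [Filter.frequently_iff]
      intro U hU
      rw [Metric.mem_nhdsWithin_iff] at hU
      obtain ⟨ε, hεpos, hε⟩ := hU
      have hs0 : 0 < min r (ε/2) := lt_min hr0 (by positivity)
      obtain ⟨ξ, hξabs, hξval⟩ := hcirc (min r (ε/2)) hs0 (min_le_left _ _)
      refine ⟨ξ, hε ⟨?_, ?_⟩, hξval⟩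
      · rw [Metric.mem_ball, Complex.dist_eq, sub_zero, hξabs]
        exact lt_of_le_of_lt (min_le_right _ _) (by linarith)
      · simp only [Set.mem_compl_iff, Set.mem_singleton_iff]
        intro h0
        rw [h0] at hξabs
        simp only [norm_zero] at hξabs
        linarith [hs0, hξabs]
    have hall := LV.main_continuation hr''0 hcont hfin hinf hfreq
    have hζabs : ∀ n, norm (LV.psi (w n) (z n)) ≤ r := fun n => by
      rw [LV.abs_psi_eq_dph]
      exact hzdph n
    have hζK : ∀ n : ℕ, LV.psi (w (φ n)) (z (φ n)) ∈ Metric.closedBall (0:ℂ) r'' := fun n => by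
      rw [Metric.mem_closedBall, Complex.dist_eq, sub_zero]
      exact le_trans (hζabs (φ n)) (by linarith)
    have hζball : ∀ n : ℕ, LV.psi (w (φ n)) (z (φ n)) ∈ Metric.ball (0:ℂ) r'' := fun n => by
      rw [Metric.mem_ball, Complex.dist_eq, sub_zero]
      exact lt_of_le_of_lt (hζabs (φ n)) hrr''
    have hphiζ : ∀ n, phiM (w n) (LV.psi (w n) (z n)) = z n :=
      fun n => LV.phiM_psi (hzd n) (hwd n)
    have hc_tend : Filter.Tendsto (fun n => sphDist (toSphere f (z (φ n))) c)
        Filter.atTop (nhds 0) := by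
      rw [Metric.tendsto_atTop]
      intro ε hε
      obtain ⟨N, hN⟩ := HK ε hε
      refine ⟨N, fun n hn => ?_⟩
      have h1 := hN n hn (LV.psi (w (φ n)) (z (φ n))) (hζK n)
      rw [hphiζ (φ n), hall _ (hζball n)] at h1
      rw [Real.dist_eq, sub_zero, _root_.abs_of_nonneg (LV.sphDist_nonneg _ _)]
      exact h1
    have hc'_tend : Filter.Tendsto (fun n => sphDist (toSphere f (z (φ n))) c')
        Filter.atTop (nhds 0) := hzlim.comp hφ.tendsto_atTop
    exact LV.eq_of_sphDist_tendsto_zero hc'_tend hc_tend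

end
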